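/- Let ε > 0, α_0 > 0, α_1 > 0, and assume hypotheses (H). There exists a constant C > 0, depending only on the data ε, λ, α_0, α_1, V, ΔΨ_0^pzc, ΔΨ_1^pzc, P^max, N^max, ρ_hl, the interface coefficients and T (and independent of the mesh and of Δt), such that for every mesh, every time step and every solution of the scheme (S) satisfying 0 ≤ P_i^k ≤ P^max and 0 ≤ N_i^k ≤ N^max for all i, k, one has, for u = P and u = N, Σ_{k=0}^{K−1} Δt ‖(u_h^{k+1} − u_h^k)/Δt‖_{−1,2,T}² ≤ C, where u_h^k ∈ H_T is the piecewise constant function associated with (u_i^k)_i and ‖w_h‖_{−1,2,T} = max{ ∫_0^1 w_h v_h dx : v_h ∈ H_T, ‖v_h‖_{1,T} ≤ 1 }. -/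

import Mathlib

open MeasureTheory Real Filter Topology

noncomputable section

namespace Corrosion

/-- The Bernoulli function `B(x) = x / (e^x - 1)`, `B(0) = 1`. -/
def Bern (x : ℝ) : ℝ := if x = 0 then 1 else x / (Real.exp x - 1)

/-- The two species: cations `P` and electrons `N`. -/
inductive Sp | P | N

/-- charge numbers: `z_P = 3`, `z_N = -1`. -/
def z : Sp → ℝ
  | Sp.P => 3
  | Sp.N => -1

/-- A mesh of `[0,1]`: edge points `xe 0 = x_{1/2} = 0 < xe 1 = x_{3/2} < … < xe I = x_{I+1/2} = 1`. -/
structure Mesh where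
  I : ℕ
  hI : 1 ≤ I
  xe : ℕ → ℝ
  xe0 : xe 0 = 0
  xeI : xe I = 1
  mono : ∀ j, j < I → xe j < xe (j + 1)

namespace Mesh

variable (m : Mesh)

/-- cell centers `x_i` for `1 ≤ i ≤ I` , with `x_0 = 0` and `x_{I+1} = 1`. -/
def xc (i : ℕ) : ℝ :=
  if i = 0 then 0 else if i = m.I + 1 then 1 else (m.xe (i - 1) + m.xe i) / 2

/-- `h_i = x_{i+1/2} - x_{i-1/2}` for `1 ≤ i ≤ I`. -/
def h (i : ℕ) : ℝ := m.xe i - m.xe (i - 1)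

/-- `h_{i+1/2} = x_{i+1} - x_i` for `0 ≤ i ≤ I`. -/
def hp (i : ℕ) : ℝ := m.xc (i + 1) - m.xc i

/-- mesh size `h = max_{1 ≤ i ≤ I} h_i`. -/
def size : ℝ := (Finset.Icc 1 m.I).sup' ⟨1, Finset.mem_Icc.mpr ⟨le_refl 1, m.hI⟩⟩ m.h

/-- piecewise constant function associated to a vector `(w_i)_{0 ≤ i ≤ I+1}`:
equal to `w i` on `(x_{i-1/2}, x_{i+1/2})`, to `w 0` at `x = 0`, to `w (I+1)` at `x = 1`. -/
def pw (w : ℕ → ℝ) (x : ℝ) : ℝ :=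
  if x = 0 then w 0 else if x = 1 then w (m.I + 1) else w (sInf {i : ℕ | x < m.xe i})

/-- square of the discrete `H¹` norm `‖w_h‖_{1,T}`. -/
def norm1sq (w : ℕ → ℝ) : ℝ :=
  (∑ i ∈ Finset.range (m.I + 1), (w (i + 1) - w i) ^ 2 / m.hp i) + w 0 ^ 2 + w (m.I + 1) ^ 2

/-- square of the discrete `L²` norm `‖w_h‖_0`. -/
def norm0sq (w : ℕ → ℝ) : ℝ := ∑ i ∈ Finset.Icc 1 m.I, m.h i * w i ^ 2

/-- the discrete dual norm `‖w_h‖_{-1,2,T}`. -/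
def normDual (w : ℕ → ℝ) : ℝ :=
  sSup {r : ℝ | ∃ v : ℕ → ℝ, m.norm1sq v ≤ 1 ∧
    r = ∫ x in Set.Ioo (0:ℝ) 1, m.pw w x * m.pw v x}

/-- piecewise constant space derivative: on `(x_i, x_{i+1})` it equals `(w_{i+1} - w_i)/h_{i+1/2}`. -/
def dpw (w : ℕ → ℝ) (x : ℝ) : ℝ :=
  (w (sInf {i : ℕ | x < m.xc (i + 1)} + 1) - w (sInf {i : ℕ | x < m.xc (i + 1)})) /
    m.hp (sInf {i : ℕ | x < m.xc (i + 1)})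

end Mesh

/-- All the data of the corrosion model. -/
structure Data where
  lam : ℝ
  eps : ℝ
  alpha0 : ℝ
  alpha1 : ℝ
  V : ℝ
  rho : ℝ
  dPsi0 : ℝ
  dPsi1 : ℝ
  umax : Sp → ℝ
  m0 : Sp → ℝ
  k0 : Sp → ℝ
  m1 : Sp → ℝ
  k1 : Sp → ℝ
  a0 : Sp → ℝ
  b0 : Sp → ℝ
  a1 : Sp → ℝ
  b1 : Sp → ℝ
  u0 : Sp → ℝ → ℝ
  lam_pos : 0 < lam
  umax_pos : ∀ u, 0 < umax u
  m0_pos : ∀ u, 0 < m0 u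
  k0_pos : ∀ u, 0 < k0 u
  m1_pos : ∀ u, 0 < m1 u
  k1_pos : ∀ u, 0 < k1 u
  a0_mem : ∀ u, a0 u ∈ Set.Icc (0:ℝ) 1
  b0_mem : ∀ u, b0 u ∈ Set.Icc (0:ℝ) 1
  a1_mem : ∀ u, a1 u ∈ Set.Icc (0:ℝ) 1
  b1_mem : ∀ u, b1 u ∈ Set.Icc (0:ℝ) 1
  u0_meas : ∀ u, Measurable (u0 u)

namespace Data
variable (d : Data)

/-- `ε_P = 1`, `ε_N = ε`. -/
def epsu : Sp → ℝ
  | Sp.P => 1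
  | Sp.N => d.eps

def beta0 (u : Sp) (x : ℝ) : ℝ :=
  d.m0 u * Real.exp (-(z u) * d.b0 u * x) + d.k0 u * Real.exp (z u * d.a0 u * x)

def beta1 (u : Sp) (x : ℝ) : ℝ :=
  d.m1 u * Real.exp (-(z u) * d.b1 u * x) + d.k1 u * Real.exp (z u * d.a1 u * x)

def gamma0 (u : Sp) (x : ℝ) : ℝ := d.m0 u * d.umax u * Real.exp (-(z u) * d.b0 u * x)

def gamma1 (u : Sp) (x : ℝ) : ℝ := d.k1 u * d.umax u * Real.exp (z u * d.a1 u * x)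

/-- Hypotheses (H). -/
def HypH : Prop :=
  (3 * d.umax Sp.P - d.umax Sp.N + d.rho = 0) ∧
  (∀ u, ∀ᵐ x ∂(volume.restrict (Set.Ioo (0:ℝ) 1)), 0 ≤ d.u0 u x ∧ d.u0 u x ≤ d.umax u) ∧
  (-(1 / (3 * d.a0 Sp.P)) * (1 + Real.log (d.alpha0 * d.a0 Sp.P * d.k0 Sp.P)) ≤ d.dPsi0 ∧
    d.dPsi0 ≤ (1 / d.a0 Sp.N) * (1 + Real.log (d.alpha0 * d.a0 Sp.N * d.k0 Sp.N))) ∧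
  (-(1 / d.b1 Sp.N) * (1 + Real.log (d.alpha1 * d.b1 Sp.N * d.m1 Sp.N)) ≤ d.dPsi1 ∧
    d.dPsi1 ≤ (1 / (3 * d.b1 Sp.P)) * (1 + Real.log (d.alpha1 * d.b1 Sp.P * d.m1 Sp.P)))

end Data

/-- `dΨ_{i+1/2} = (Ψ_{i+1} - Ψ_i)/h_{i+1/2}`. -/
def dPsiF (m : Mesh) (Psi : ℕ → ℝ) (i : ℕ) : ℝ := (Psi (i + 1) - Psi i) / m.hp i

/-- the Scharfetter-Gummel numerical flux `F_{u,i+1/2}`. -/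
def Flux (m : Mesh) (d : Data) (u : Sp) (Psi w : ℕ → ℝ) (i : ℕ) : ℝ :=
  (Bern (z u * m.hp i * dPsiF m Psi i) * w i -
    Bern (-(z u) * m.hp i * dPsiF m Psi i) * w (i + 1)) / m.hp i

/-- The fully implicit scheme (S), with time step `Δt = T / K`.
`sol u k i` is `u_i^k` (for `u = P, N`) and `Psi k i` is `Ψ_i^k`. -/
def Scheme (m : Mesh) (d : Data) (T : ℝ) (K : ℕ)
    (sol : Sp → ℕ → ℕ → ℝ) (Psi : ℕ → ℕ → ℝ) : Prop :=
  (∀ u i, 1 ≤ i → i ≤ m.I →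
    sol u 0 i = (1 / m.h i) * ∫ x in Set.Ioo (m.xe (i - 1)) (m.xe i), d.u0 u x) ∧
  (∀ k, k < K → ∀ i, 1 ≤ i → i ≤ m.I →
    -(d.lam ^ 2) * (dPsiF m (Psi (k + 1)) i - dPsiF m (Psi (k + 1)) (i - 1)) =
      m.h i * (3 * sol Sp.P (k + 1) i - sol Sp.N (k + 1) i + d.rho)) ∧
  (∀ u k, k < K → ∀ i, 1 ≤ i → i ≤ m.I →
    d.epsu u * m.h i * (sol u (k + 1) i - sol u k i) / (T / K) +
      Flux m d u (Psi (k + 1)) (sol u (k + 1)) i -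
      Flux m d u (Psi (k + 1)) (sol u (k + 1)) (i - 1) = 0) ∧
  (∀ k, k < K → Psi (k + 1) 0 - d.alpha0 * dPsiF m (Psi (k + 1)) 0 = d.dPsi0) ∧
  (∀ k, k < K →
    Psi (k + 1) (m.I + 1) + d.alpha1 * dPsiF m (Psi (k + 1)) m.I = d.V - d.dPsi1) ∧
  (∀ u k, k < K →
    -(Flux m d u (Psi (k + 1)) (sol u (k + 1)) 0) =
      d.beta0 u (Psi (k + 1) 0) * sol u (k + 1) 0 - d.gamma0 u (Psi (k + 1) 0)) ∧
  (∀ u k, k < K →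
    Flux m d u (Psi (k + 1)) (sol u (k + 1)) m.I =
      d.beta1 u (d.V - Psi (k + 1) (m.I + 1)) * sol u (k + 1) (m.I + 1) -
      d.gamma1 u (d.V - Psi (k + 1) (m.I + 1)))

/-- The stability property `0 ≤ u_i^k ≤ u^max` for all `i, k`. -/
def Stable (m : Mesh) (d : Data) (K : ℕ) (sol : Sp → ℕ → ℕ → ℝ) : Prop :=
  ∀ u k, k ≤ K → ∀ i, i ≤ m.I + 1 → 0 ≤ sol u k i ∧ sol u k i ≤ d.umax u

/-- the approximate space-time solution `w_{h,Δt}`, equal to the piecewise constant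
function built on `w^{k+1}` for `t ∈ [t^k, t^{k+1})`, with `Δt = T/K`. -/
def apx (m : Mesh) (T : ℝ) (K : ℕ) (w : ℕ → ℕ → ℝ) (x t : ℝ) : ℝ :=
  m.pw (w (Nat.floor (t / (T / K)) + 1)) x

/-- the discrete space derivative `∂_{x,T} w_{h,Δt}`. -/
def dapx (m : Mesh) (T : ℝ) (K : ℕ) (w : ℕ → ℕ → ℝ) (x t : ℝ) : ℝ :=
  m.dpw (w (Nat.floor (t / (T / K)) + 1)) x


/-- hyperbolic cotangent `coth y = cosh y / sinh y`. -/
def coth (x : ℝ) : ℝ := Real.cosh x / Real.sinh x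

/-- approximate trace at `x = 0`: `t ∈ [t^k, t^{k+1}) ↦ w_0^{k+1}`. -/
def trace0 (T : ℝ) (K : ℕ) (w : ℕ → ℕ → ℝ) (t : ℝ) : ℝ :=
  w (Nat.floor (t / (T / K)) + 1) 0

/-- approximate trace at `x = 1`: `t ∈ [t^k, t^{k+1}) ↦ w_{I+1}^{k+1}`. -/
def trace1 (m : Mesh) (T : ℝ) (K : ℕ) (w : ℕ → ℕ → ℝ) (t : ℝ) : ℝ :=
  w (Nat.floor (t / (T / K)) + 1) (m.I + 1)

/-- the measure on `(0,1) × (0,T)` (space × time). -/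
def stMeasure (T : ℝ) : MeasureTheory.Measure (ℝ × ℝ) :=
  (MeasureTheory.volume.restrict (Set.Ioo (0:ℝ) 1)).prod
    (MeasureTheory.volume.restrict (Set.Ioo (0:ℝ) T))

end Corrosion
namespace Corrosion
namespace Mesh
variable (m : Mesh)

lemma xe_mono : ∀ {i j : ℕ}, i ≤ j → j ≤ m.I → m.xe i ≤ m.xe j := by
  intro i j hij hj
  induction j with
  | zero => simp_all
  | succ n ih =>
    rcases Nat.eq_or_lt_of_le hij with h | h
    · rw [h]
    · exact le_trans (ih (Nat.lt_succ_iff.mp h) (le_trans (Nat.le_succ n) hj))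
        (le_of_lt (m.mono n (Nat.lt_of_succ_le hj)))

lemma xe_nonneg {i : ℕ} (hi : i ≤ m.I) : 0 ≤ m.xe i := by
  have := m.xe_mono (Nat.zero_le i) hi; rw [m.xe0] at this; exact this

lemma xe_le_one {i : ℕ} (hi : i ≤ m.I) : m.xe i ≤ 1 := by
  have := m.xe_mono hi le_rfl; rw [m.xeI] at this; exact this

lemma xc_zero : m.xc 0 = 0 := by simp [xc]

lemma xc_last : m.xc (m.I + 1) = 1 := by
  have : m.I + 1 ≠ 0 := Nat.succ_ne_zero _
  simp [xc, this]

lemma xc_mem {i : ℕ} (hi1 : 1 ≤ i) (hi : i ≤ m.I) :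
    m.xe (i - 1) < m.xc i ∧ m.xc i < m.xe i := by
  have h0 : i ≠ 0 := Nat.one_le_iff_ne_zero.mp hi1
  have h1 : i ≠ m.I + 1 := by omega
  have hlt : m.xe (i - 1) < m.xe i := by
    have := m.mono (i - 1) (by omega)
    rwa [Nat.sub_add_cancel hi1] at this
  constructor <;> · simp only [xc, h0, h1, if_false] ; linarith

lemma xc_nonneg {i : ℕ} (hle : i ≤ m.I + 1) : 0 ≤ m.xc i := by
  rcases Nat.eq_zero_or_pos i with h | h
  · simp [h, xc_zero]
  · by_cases h2 : i = m.I + 1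
    · simp [h2, xc_last]
    · have hi : i ≤ m.I := by omega
      have := (m.xc_mem h hi).1
      have := m.xe_nonneg (show i - 1 ≤ m.I by omega)
      linarith

lemma xc_le_one {i : ℕ} (hle : i ≤ m.I + 1) : m.xc i ≤ 1 := by
  rcases Nat.eq_zero_or_pos i with h | h
  · simp [h, xc_zero]
  · by_cases h2 : i = m.I + 1
    · simp [h2, xc_last]
    · have hi : i ≤ m.I := by omega
      have := (m.xc_mem h hi).2
      have := m.xe_le_one hi
      linarith

lemma xc_lt {i : ℕ} (hi : i ≤ m.I) : m.xc i < m.xc (i + 1) := by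
  rcases Nat.eq_zero_or_pos i with h0 | h0
  · subst h0
    have := (m.xc_mem le_rfl m.hI).1
    rw [xc_zero]
    simpa [m.xe0] using this
  · rcases Nat.eq_or_lt_of_le hi with h1 | h1
    · subst h1
      rw [xc_last]
      exact lt_of_lt_of_le (m.xc_mem h0 le_rfl).2 (m.xe_le_one le_rfl)
    · have a := (m.xc_mem h0 hi).2
      have b := (m.xc_mem (by omega) (by omega : i + 1 ≤ m.I)).1
      simpa using lt_of_lt_of_le a (le_of_lt (by simpa using b))

lemma hp_pos {i : ℕ} (hi : i ≤ m.I) : 0 < m.hp i := sub_pos.mpr (m.xc_lt hi)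

lemma hp_le_one {i : ℕ} (hi : i ≤ m.I) : m.hp i ≤ 1 := by
  have := m.xc_nonneg (i := i) (by omega)
  have := m.xc_le_one (i := i + 1) (by omega)
  unfold hp; linarith

lemma h_pos {i : ℕ} (h1 : 1 ≤ i) (hi : i ≤ m.I) : 0 < m.h i := by
  have := m.mono (i - 1) (by omega)
  rw [Nat.sub_add_cancel h1] at this
  unfold h; linarith

lemma sum_h : ∑ i ∈ Finset.Icc 1 m.I, m.h i = 1 := by
  have : ∀ n, n ≤ m.I → ∑ i ∈ Finset.Icc 1 n, m.h i = m.xe n - m.xe 0 := by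
    intro n hn
    induction n with
    | zero => simp
    | succ k ih =>
      rw [Finset.sum_Icc_succ_top (by omega : 1 ≤ k + 1), ih (by omega)]
      unfold h; simp
  rw [this m.I le_rfl, m.xeI, m.xe0]; ring

lemma sum_hp : ∑ i ∈ Finset.range (m.I + 1), m.hp i = 1 := by
  unfold hp
  rw [Finset.sum_range_sub (fun i => m.xc i), xc_last, xc_zero]
  ring

end Mesh
end Corrosion
namespace Corrosion

lemma exp_ne_one {x : ℝ} (h : x ≠ 0) : Real.exp x ≠ 1 := by
  intro hc
  exact h (by rwa [← Real.exp_zero, Real.exp_eq_exp] at hc)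

lemma Bern_sub (x : ℝ) : Bern (-x) = Bern x + x := by
  rcases eq_or_ne x 0 with h | h
  · simp [h, Bern]
  have h1 : Real.exp x - 1 ≠ 0 := sub_ne_zero.mpr (exp_ne_one h)
  have h2 : Real.exp (-x) - 1 ≠ 0 := sub_ne_zero.mpr (exp_ne_one (neg_ne_zero.mpr h))
  have hx : (-x : ℝ) ≠ 0 := neg_ne_zero.mpr h
  have he : Real.exp x ≠ 0 := Real.exp_ne_zero x
  simp only [Bern, if_neg h, if_neg hx]
  rw [Real.exp_neg] at h2 ⊢
  rw [div_eq_iff h2]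
  field_simp
  ring

lemma exp_sub_one_pos {x : ℝ} (hx : 0 < x) : 0 < Real.exp x - 1 := by
  have := Real.add_one_le_exp x; linarith

/-- `Bern x ≤ 1` for `x ≥ 0`. -/
lemma Bern_le_one {x : ℝ} (hx : 0 ≤ x) : Bern x ≤ 1 := by
  rcases eq_or_lt_of_le hx with h | h
  · simp [← h, Bern]
  · have hgt := exp_sub_one_pos h
    have := Real.add_one_le_exp x
    simp only [Bern, if_neg (ne_of_gt h)]
    rw [div_le_one hgt]; linarith

/-- `exp(-x) ≤ Bern x` for `x ≥ 0`. -/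
lemma exp_le_Bern {x : ℝ} (hx : 0 ≤ x) : Real.exp (-x) ≤ Bern x := by
  rcases eq_or_lt_of_le hx with h | h
  · simp [← h, Bern]
  · have hgt := exp_sub_one_pos h
    have hp := Real.exp_pos x
    have h2 : (1 - x) * Real.exp x ≤ 1 := by
      have h3 := mul_le_mul_of_nonneg_right (Real.add_one_le_exp (-x)) hp.le
      rw [← Real.exp_add, neg_add_cancel, Real.exp_zero] at h3
      have h4 : (1 - x) * Real.exp x = (-x + 1) * Real.exp x := by ring
      linarith
    simp only [Bern, if_neg (ne_of_gt h)]
    rw [Real.exp_neg, le_div_iff₀ hgt, inv_mul_eq_div, div_le_iff₀ hp]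
    nlinarith

lemma Bern_ge (x : ℝ) : Real.exp (-|x|) ≤ Bern x := by
  rcases le_or_gt 0 x with hx | hx
  · rw [abs_of_nonneg hx]; exact exp_le_Bern hx
  · have e := Bern_sub (-x)
    rw [neg_neg] at e
    have h1 : Real.exp (-(-x)) ≤ Bern (-x) := exp_le_Bern (by linarith)
    rw [neg_neg] at h1
    have : Real.exp (-|x|) ≤ Real.exp x := Real.exp_le_exp.mpr (neg_abs_le x)
    have hb : (0:ℝ) < Real.exp x := Real.exp_pos x
    -- Bern x = Bern (-x) + (-x) ≥ exp x + (-x) ≥ exp x ≥ exp (-|x|)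
    rw [e]; linarith

lemma Bern_le (x : ℝ) : Bern x ≤ Real.exp |x| := by
  rcases le_or_gt 0 x with hx | hx
  · calc Bern x ≤ 1 := Bern_le_one hx
    _ ≤ Real.exp |x| := Real.one_le_exp (abs_nonneg x)
  · have e := Bern_sub (-x)
    rw [neg_neg] at e
    have h1 : Bern (-x) ≤ 1 := Bern_le_one (by linarith)
    rw [abs_of_neg hx, e]
    linarith [Real.add_one_le_exp (-x)]

lemma Bern_pos (x : ℝ) : 0 < Bern x := lt_of_lt_of_le (Real.exp_pos _) (Bern_ge x)

end Corrosion
namespace Corrosion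
namespace Mesh
variable (m : Mesh)

lemma pw_eq (w : ℕ → ℝ) {i : ℕ} (h1 : 1 ≤ i) (hi : i ≤ m.I) {x : ℝ}
    (hx : x ∈ Set.Ioo (m.xe (i - 1)) (m.xe i)) : m.pw w x = w i := by
  obtain ⟨hxl, hxr⟩ := hx
  have hx0 : x ≠ 0 := by
    have := m.xe_nonneg (show i - 1 ≤ m.I by omega); intro hc; rw [hc] at hxl; linarith
  have hx1 : x ≠ 1 := by
    have := m.xe_le_one hi; intro hc; rw [hc] at hxr; linarith
  have hmem : i ∈ {j : ℕ | x < m.xe j} := hxr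
  have hinf : sInf {j : ℕ | x < m.xe j} = i := by
    refine le_antisymm (Nat.sInf_le hmem) ?_
    by_contra hc
    push_neg at hc
    have hjmem := Nat.sInf_mem (Set.nonempty_of_mem hmem)
    set j := sInf {j : ℕ | x < m.xe j} with hj
    have hji : j ≤ i - 1 := by omega
    have : m.xe j ≤ m.xe (i - 1) := m.xe_mono hji (by omega)
    have : x < m.xe (i - 1) := lt_of_lt_of_le hjmem this
    linarith
  simp only [pw, if_neg hx0, if_neg hx1, hinf]

lemma integral_pw_mul (w v : ℕ → ℝ) :
    ∫ x in Set.Ioo (0:ℝ) 1, m.pw w x * m.pw v x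
      = ∑ i ∈ Finset.Icc 1 m.I, m.h i * (w i * v i) := by
  set f : ℝ → ℝ := fun x => m.pw w x * m.pw v x with hf
  set s : ℕ → Set ℝ := fun i => Set.Ioo (m.xe (i - 1)) (m.xe i) with hs
  have hmeas : ∀ i ∈ Finset.Icc 1 m.I, MeasurableSet (s i) := fun i _ => measurableSet_Ioo
  have hdisj : (↑(Finset.Icc 1 m.I) : Set ℕ).Pairwise (Function.onFun Disjoint s) := by
    intro i hi j hj hij
    simp only [Finset.coe_Icc, Set.mem_Icc] at hi hj
    rcases hij.lt_or_gt with hlt | hlt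
    · simp only [Function.onFun]
      rw [Set.disjoint_left]
      intro x hx1 hx2
      have hle : m.xe i ≤ m.xe (j - 1) := m.xe_mono (by omega) (by omega)
      have := hx1.2; have := hx2.1; linarith
    · simp only [Function.onFun]
      rw [Set.disjoint_left]
      intro x hx1 hx2
      have hle : m.xe j ≤ m.xe (i - 1) := m.xe_mono (by omega) (by omega)
      have := hx2.2; have := hx1.1; linarith
  have hconst : ∀ i ∈ Finset.Icc 1 m.I, Set.EqOn f (fun _ => w i * v i) (s i) := by
    intro i hi x hx
    rw [Finset.mem_Icc] at hi
    simp only [hf]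
    rw [m.pw_eq w hi.1 hi.2 hx, m.pw_eq v hi.1 hi.2 hx]
  have hint : ∀ i ∈ Finset.Icc 1 m.I, MeasureTheory.IntegrableOn f (s i) := by
    intro i hi
    rw [MeasureTheory.integrableOn_congr_fun (hconst i hi) measurableSet_Ioo]
    exact (MeasureTheory.integrableOn_const_iff).mpr (Or.inr (by rw [Real.volume_Ioo]; exact ENNReal.ofReal_lt_top))
  -- the union covers Ioo 0 1 up to a finite set
  have hsub : (⋃ i ∈ Finset.Icc 1 m.I, s i) ⊆ Set.Ioo (0:ℝ) 1 := by
    intro x hx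
    simp only [Set.mem_iUnion] at hx
    obtain ⟨i, hi, hxi⟩ := hx
    rw [Finset.mem_Icc] at hi
    constructor
    · exact lt_of_le_of_lt (m.xe_nonneg (show i - 1 ≤ m.I by omega)) hxi.1
    · exact lt_of_lt_of_le hxi.2 (m.xe_le_one hi.2)
  have hcompl : Set.Ioo (0:ℝ) 1 \ (⋃ i ∈ Finset.Icc 1 m.I, s i) ⊆
      ⋃ j ∈ Finset.Icc 1 m.I, {m.xe j} := by
    intro x hx
    obtain ⟨⟨hx0, hx1⟩, hxU⟩ := hx
    have hne : (Set.Nonempty {n : ℕ | x ≤ m.xe n}) := ⟨m.I, by simp [Set.mem_setOf_eq, m.xeI, le_of_lt hx1]⟩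
    set j := sInf {n : ℕ | x ≤ m.xe n} with hj
    have hjmem : x ≤ m.xe j := Nat.sInf_mem hne
    have hjI : j ≤ m.I := Nat.sInf_le (by simp [Set.mem_setOf_eq, m.xeI, le_of_lt hx1])
    have hj1 : 1 ≤ j := by
      rcases Nat.eq_zero_or_pos j with h | h
      · exfalso; rw [h] at hjmem; rw [m.xe0] at hjmem; linarith
      · exact h
    have hprev : m.xe (j - 1) < x := by
      have : j - 1 ∉ {n : ℕ | x ≤ m.xe n} := Nat.notMem_of_lt_sInf (by omega)
      simpa [Set.mem_setOf_eq, not_le] using this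
    rcases eq_or_lt_of_le hjmem with heq | hlt
    · simp only [Set.mem_iUnion]
      exact ⟨j, Finset.mem_Icc.mpr ⟨hj1, hjI⟩, heq⟩
    · exfalso
      apply hxU
      simp only [Set.mem_iUnion]
      exact ⟨j, Finset.mem_Icc.mpr ⟨hj1, hjI⟩, hprev, hlt⟩
  have hae : Set.Ioo (0:ℝ) 1 =ᶠ[MeasureTheory.ae MeasureTheory.volume]
      (⋃ i ∈ Finset.Icc 1 m.I, s i) := by
    rw [MeasureTheory.ae_eq_set]
    constructor
    · refine MeasureTheory.measure_mono_null hcompl ?_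
      refine MeasureTheory.measure_mono_null (Set.iUnion₂_subset_iUnion _ _)
        (MeasureTheory.measure_iUnion_null fun j => MeasureTheory.measure_singleton _)
    · rw [Set.diff_eq_empty.mpr hsub]; exact MeasureTheory.measure_empty
  rw [MeasureTheory.setIntegral_congr_set hae,
    MeasureTheory.integral_biUnion_finset _ hmeas hdisj hint]
  refine Finset.sum_congr rfl fun i hi => ?_
  rw [MeasureTheory.setIntegral_congr_fun measurableSet_Ioo (hconst i hi),
    MeasureTheory.setIntegral_const, MeasureTheory.measureReal_def, Real.volume_Ioo]
  rw [Finset.mem_Icc] at hi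
  have hpos : 0 < m.xe i - m.xe (i - 1) := by
    have := m.h_pos hi.1 hi.2; unfold h at this; linarith
  rw [ENNReal.toReal_ofReal hpos.le]
  simp only [smul_eq_mul, Mesh.h]

end Mesh
end Corrosion
namespace Corrosion

lemma sum_by_parts (F v : ℕ → ℝ) (n : ℕ) :
    ∑ i ∈ Finset.Icc 1 n, (F i - F (i - 1)) * v i
      = -(∑ i ∈ Finset.range (n + 1), F i * (v (i + 1) - v i)) - F 0 * v 0 + F n * v (n + 1) := by
  induction n with
  | zero => simp; ring
  | succ k ih =>
    rw [Finset.sum_Icc_succ_top (by omega : 1 ≤ k + 1), ih, Finset.sum_range_succ _ (k + 1)]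
    simp only [Nat.add_sub_cancel]
    ring

lemma sum_Icc_tel (g : ℕ → ℝ) (n : ℕ) :
    ∑ i ∈ Finset.Icc 1 n, (g i - g (i - 1)) = g n - g 0 := by
  induction n with
  | zero => simp
  | succ k ih =>
    rw [Finset.sum_Icc_succ_top (by omega : 1 ≤ k + 1), ih]
    simp only [Nat.add_sub_cancel]
    ring

namespace Mesh
variable (m : Mesh)

lemma sum_sq_div_nonneg (a : ℕ → ℝ) :
    0 ≤ ∑ i ∈ Finset.range (m.I + 1), a i ^ 2 / m.hp i :=
  Finset.sum_nonneg fun i hi => div_nonneg (sq_nonneg _)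
    (m.hp_pos (by simpa [Nat.lt_succ_iff] using hi)).le

lemma cs1 (a : ℕ → ℝ) :
    ∑ i ∈ Finset.range (m.I + 1), |a i|
      ≤ Real.sqrt (∑ i ∈ Finset.range (m.I + 1), a i ^ 2 / m.hp i) := by
  have key := Finset.sum_mul_sq_le_sq_mul_sq (Finset.range (m.I + 1))
    (fun i => |a i| / Real.sqrt (m.hp i)) (fun i => Real.sqrt (m.hp i))
  have e1 : ∀ i ∈ Finset.range (m.I + 1),
      |a i| / Real.sqrt (m.hp i) * Real.sqrt (m.hp i) = |a i| := by
    intro i hi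
    have hpos := m.hp_pos (by simpa [Nat.lt_succ_iff] using hi)
    rw [div_mul_cancel₀]
    exact (Real.sqrt_pos.mpr hpos).ne'
  have e2 : ∀ i ∈ Finset.range (m.I + 1),
      (|a i| / Real.sqrt (m.hp i)) ^ 2 = a i ^ 2 / m.hp i := by
    intro i hi
    have hpos := m.hp_pos (by simpa [Nat.lt_succ_iff] using hi)
    rw [div_pow, sq_abs, Real.sq_sqrt hpos.le]
  have e3 : ∀ i ∈ Finset.range (m.I + 1), (Real.sqrt (m.hp i)) ^ 2 = m.hp i := by
    intro i hi
    exact Real.sq_sqrt (m.hp_pos (by simpa [Nat.lt_succ_iff] using hi)).le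
  rw [Finset.sum_congr rfl e1, Finset.sum_congr rfl e2, Finset.sum_congr rfl e3, m.sum_hp,
    mul_one] at key
  have h0 : 0 ≤ ∑ i ∈ Finset.range (m.I + 1), |a i| :=
    Finset.sum_nonneg fun i _ => abs_nonneg _
  calc ∑ i ∈ Finset.range (m.I + 1), |a i|
      = Real.sqrt ((∑ i ∈ Finset.range (m.I + 1), |a i|) ^ 2) := (Real.sqrt_sq h0).symm
    _ ≤ Real.sqrt (∑ i ∈ Finset.range (m.I + 1), a i ^ 2 / m.hp i) := Real.sqrt_le_sqrt key

lemma cs2 (a b : ℕ → ℝ) :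
    ∑ i ∈ Finset.range (m.I + 1), |a i| * |b i| / m.hp i
      ≤ Real.sqrt (∑ i ∈ Finset.range (m.I + 1), a i ^ 2 / m.hp i)
        * Real.sqrt (∑ i ∈ Finset.range (m.I + 1), b i ^ 2 / m.hp i) := by
  have key := Finset.sum_mul_sq_le_sq_mul_sq (Finset.range (m.I + 1))
    (fun i => |a i| / Real.sqrt (m.hp i)) (fun i => |b i| / Real.sqrt (m.hp i))
  have e1 : ∀ i ∈ Finset.range (m.I + 1),
      |a i| / Real.sqrt (m.hp i) * (|b i| / Real.sqrt (m.hp i)) = |a i| * |b i| / m.hp i := by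
    intro i hi
    have hpos := m.hp_pos (by simpa [Nat.lt_succ_iff] using hi)
    rw [div_mul_div_comm, Real.mul_self_sqrt hpos.le]
  have e2 : ∀ (c : ℕ → ℝ), ∀ i ∈ Finset.range (m.I + 1),
      (|c i| / Real.sqrt (m.hp i)) ^ 2 = c i ^ 2 / m.hp i := by
    intro c i hi
    have hpos := m.hp_pos (by simpa [Nat.lt_succ_iff] using hi)
    rw [div_pow, sq_abs, Real.sq_sqrt hpos.le]
  rw [Finset.sum_congr rfl e1, Finset.sum_congr rfl (e2 a), Finset.sum_congr rfl (e2 b)] at key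
  have h0 : 0 ≤ ∑ i ∈ Finset.range (m.I + 1), |a i| * |b i| / m.hp i :=
    Finset.sum_nonneg fun i hi => div_nonneg (mul_nonneg (abs_nonneg _) (abs_nonneg _))
      (m.hp_pos (by simpa [Nat.lt_succ_iff] using hi)).le
  calc ∑ i ∈ Finset.range (m.I + 1), |a i| * |b i| / m.hp i
      = Real.sqrt ((∑ i ∈ Finset.range (m.I + 1), |a i| * |b i| / m.hp i) ^ 2) :=
        (Real.sqrt_sq h0).symm
    _ ≤ _ := by
        rw [← Real.sqrt_mul (m.sum_sq_div_nonneg a)]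
        exact Real.sqrt_le_sqrt key

end Mesh
end Corrosion
namespace Corrosion

/-- bound on the total charge. -/
def RR (d : Data) : ℝ := 3 * d.umax Sp.P + d.umax Sp.N + |d.rho|

/-- uniform bound on the discrete gradient of the potential. -/
def MM (d : Data) : ℝ :=
  |d.V| + |d.dPsi0| + |d.dPsi1| + (1 + d.alpha1) * (RR d / d.lam ^ 2) + RR d / d.lam ^ 2

/-- max of the two maximal densities. -/
def UM (d : Data) : ℝ := max (d.umax Sp.P) (d.umax Sp.N)

def X0c (d : Data) : ℝ := |d.dPsi0| + d.alpha0 * MM d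
def X1c (d : Data) : ℝ := |d.dPsi1| + d.alpha1 * MM d

def COc (d : Data) : ℝ :=
  2 * (d.m0 Sp.P + d.m0 Sp.N) + (d.k0 Sp.P + d.k0 Sp.N) +
    2 * (d.k1 Sp.P + d.k1 Sp.N) + (d.m1 Sp.P + d.m1 Sp.N)

/-- bound on the boundary fluxes. -/
def Cb (d : Data) : ℝ := COc d * UM d * Real.exp (3 * (X0c d + X1c d))

lemma z_abs (u : Sp) : |z u| ≤ 3 := by cases u <;> simp [z] <;> norm_num

lemma epsu_pos (d : Data) (heps : 0 < d.eps) (u : Sp) : 0 < d.epsu u := by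
  cases u
  · norm_num [Data.epsu]
  · simpa [Data.epsu] using heps

lemma epsu_ge (d : Data) (heps : 0 < d.eps) (u : Sp) : min 1 d.eps ≤ d.epsu u := by
  cases u <;> simp [Data.epsu]

lemma epsu_le (d : Data) (u : Sp) : d.epsu u ≤ max 1 d.eps := by
  cases u <;> simp [Data.epsu]

lemma umax_le_UM (d : Data) (u : Sp) : d.umax u ≤ UM d := by
  cases u <;> simp [UM]

lemma UM_pos (d : Data) : 0 < UM d := lt_of_lt_of_le (d.umax_pos Sp.P) (umax_le_UM d Sp.P)

lemma RR_nonneg (d : Data) : 0 ≤ RR d := by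
  have := d.umax_pos Sp.P; have := d.umax_pos Sp.N; have := abs_nonneg d.rho
  unfold RR; linarith

lemma MM_nonneg (d : Data) (ha1 : 0 < d.alpha1) : 0 ≤ MM d := by
  have h1 := abs_nonneg d.V; have h2 := abs_nonneg d.dPsi0; have h3 := abs_nonneg d.dPsi1
  have h4 : 0 ≤ RR d / d.lam ^ 2 := div_nonneg (RR_nonneg d) (by positivity)
  have h5 : 0 ≤ (1 + d.alpha1) * (RR d / d.lam ^ 2) := mul_nonneg (by linarith) h4
  unfold MM; linarith

lemma X0c_nonneg (d : Data) (ha0 : 0 < d.alpha0) (ha1 : 0 < d.alpha1) : 0 ≤ X0c d := by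
  have := abs_nonneg d.dPsi0
  have := mul_nonneg ha0.le (MM_nonneg d ha1)
  unfold X0c; linarith

lemma X1c_nonneg (d : Data) (ha1 : 0 < d.alpha1) : 0 ≤ X1c d := by
  have := abs_nonneg d.dPsi1
  have := mul_nonneg ha1.le (MM_nonneg d ha1)
  unfold X1c; linarith

lemma COc_pos (d : Data) : 0 < COc d := by
  have := d.m0_pos Sp.P; have := d.m0_pos Sp.N
  have := d.k0_pos Sp.P; have := d.k0_pos Sp.N
  have := d.m1_pos Sp.P; have := d.m1_pos Sp.N
  have := d.k1_pos Sp.P; have := d.k1_pos Sp.N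
  unfold COc; linarith

lemma Cb_pos (d : Data) : 0 < Cb d :=
  mul_pos (mul_pos (COc_pos d) (UM_pos d)) (Real.exp_pos _)

lemma exp_mul3_le {a b c A B C : ℝ} (ha : |a| ≤ A) (hb : |b| ≤ B) (hc : |c| ≤ C) :
    Real.exp (a * b * c) ≤ Real.exp (A * B * C) := by
  apply Real.exp_le_exp.mpr
  have hA : 0 ≤ A := le_trans (abs_nonneg a) ha
  have hB : 0 ≤ B := le_trans (abs_nonneg b) hb
  have hC : 0 ≤ C := le_trans (abs_nonneg c) hc
  calc a * b * c ≤ |a * b * c| := le_abs_self _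
    _ = |a| * |b| * |c| := by rw [abs_mul, abs_mul]
    _ ≤ A * B * C := by
        apply mul_le_mul (mul_le_mul ha hb (abs_nonneg b) hA) hc (abs_nonneg c)
          (mul_nonneg hA hB)

end Corrosion
namespace Corrosion

section DPsi

variable (d : Data) (T : ℝ) (K : ℕ) (m : Mesh)
  (sol : Sp → ℕ → ℕ → ℝ) (Psi : ℕ → ℕ → ℝ)

/-- uniform bound on the discrete potential gradient. -/
lemma dPsi_bound (ha0 : 0 < d.alpha0) (ha1 : 0 < d.alpha1)
    (hS : Scheme m d T K sol Psi) (hSt : Stable m d K sol)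
    {k : ℕ} (hk : k < K) : ∀ i ≤ m.I, |dPsiF m (Psi (k + 1)) i| ≤ MM d := by
  set g : ℕ → ℝ := fun i => dPsiF m (Psi (k + 1)) i with hg
  have hlam : (0:ℝ) < d.lam ^ 2 := by have := d.lam_pos; positivity
  -- the discrete charge is uniformly bounded
  have hrho : ∀ i, 1 ≤ i → i ≤ m.I →
      |3 * sol Sp.P (k + 1) i - sol Sp.N (k + 1) i + d.rho| ≤ RR d := by
    intro i h1 hi
    have hP := hSt Sp.P (k + 1) (by omega) i (by omega)
    have hN := hSt Sp.N (k + 1) (by omega) i (by omega)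
    rw [abs_le]; unfold RR
    constructor
    · have := abs_nonneg d.rho
      have := neg_abs_le d.rho
      nlinarith
    · have := le_abs_self d.rho
      nlinarith
  -- difference of gradients
  have hdiff : ∀ i ≤ m.I, |g i - g 0| ≤ RR d / d.lam ^ 2 := by
    intro i hi
    have htel := sum_Icc_tel g i
    have hterm : ∀ j ∈ Finset.Icc 1 i, |g j - g (j - 1)| ≤ m.h j * RR d / d.lam ^ 2 := by
      intro j hj
      rw [Finset.mem_Icc] at hj
      have hP := (hS.2.1) k hk j hj.1 (le_trans hj.2 hi)
      have : g j - g (j - 1) = -(m.h j * (3 * sol Sp.P (k+1) j - sol Sp.N (k+1) j + d.rho)) / d.lam ^ 2 := by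
        rw [eq_div_iff hlam.ne']
        simp only [hg]
        nlinarith [hP]
      rw [this, abs_div, abs_of_pos hlam, abs_neg, abs_mul,
        abs_of_pos (m.h_pos hj.1 (le_trans hj.2 hi))]
      gcongr
      · exact (m.h_pos hj.1 (le_trans hj.2 hi)).le
      · exact hrho j hj.1 (le_trans hj.2 hi)
    calc |g i - g 0| = |∑ j ∈ Finset.Icc 1 i, (g j - g (j - 1))| := by rw [htel]
      _ ≤ ∑ j ∈ Finset.Icc 1 i, |g j - g (j - 1)| := Finset.abs_sum_le_sum_abs _ _
      _ ≤ ∑ j ∈ Finset.Icc 1 i, m.h j * RR d / d.lam ^ 2 := Finset.sum_le_sum hterm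
      _ = (∑ j ∈ Finset.Icc 1 i, m.h j) * RR d / d.lam ^ 2 := by
          rw [← Finset.sum_div, ← Finset.sum_mul]
      _ ≤ 1 * RR d / d.lam ^ 2 := by
          gcongr ?_ * _ / _
          · exact RR_nonneg d
          calc ∑ j ∈ Finset.Icc 1 i, m.h j ≤ ∑ j ∈ Finset.Icc 1 m.I, m.h j := by
                apply Finset.sum_le_sum_of_subset_of_nonneg
                · exact Finset.Icc_subset_Icc le_rfl hi
                · intro j hj _
                  rw [Finset.mem_Icc] at hj
                  exact (m.h_pos hj.1 hj.2).le
            _ = 1 := m.sum_h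
      _ = RR d / d.lam ^ 2 := by rw [one_mul]
  -- telescoping the potential
  have htel2 : ∑ i ∈ Finset.range (m.I + 1), m.hp i * g i
      = Psi (k + 1) (m.I + 1) - Psi (k + 1) 0 := by
    have : ∀ i ∈ Finset.range (m.I + 1), m.hp i * g i
        = Psi (k + 1) (i + 1) - Psi (k + 1) i := by
      intro i hi
      rw [Finset.mem_range, Nat.lt_succ_iff] at hi
      simp only [hg, dPsiF]
      rw [mul_div_cancel₀ _ (m.hp_pos hi).ne']
    rw [Finset.sum_congr rfl this, Finset.sum_range_sub (fun i => Psi (k + 1) i)]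
  -- expansion around g 0
  have hexp : ∑ i ∈ Finset.range (m.I + 1), m.hp i * g i
      = g 0 + ∑ i ∈ Finset.range (m.I + 1), m.hp i * (g i - g 0) := by
    have : ∀ i ∈ Finset.range (m.I + 1), m.hp i * g i
        = m.hp i * g 0 + m.hp i * (g i - g 0) := by intro i _; ring
    rw [Finset.sum_congr rfl this, Finset.sum_add_distrib, ← Finset.sum_mul, m.sum_hp, one_mul]
  have hE : |∑ i ∈ Finset.range (m.I + 1), m.hp i * (g i - g 0)| ≤ RR d / d.lam ^ 2 := by
    calc |∑ i ∈ Finset.range (m.I + 1), m.hp i * (g i - g 0)|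
        ≤ ∑ i ∈ Finset.range (m.I + 1), |m.hp i * (g i - g 0)| :=
          Finset.abs_sum_le_sum_abs _ _
      _ ≤ ∑ i ∈ Finset.range (m.I + 1), m.hp i * (RR d / d.lam ^ 2) := by
          apply Finset.sum_le_sum
          intro i hi
          rw [Finset.mem_range, Nat.lt_succ_iff] at hi
          rw [abs_mul, abs_of_pos (m.hp_pos hi)]
          exact mul_le_mul_of_nonneg_left (hdiff i hi) (m.hp_pos hi).le
      _ = RR d / d.lam ^ 2 := by rw [← Finset.sum_mul, m.sum_hp, one_mul]
  -- boundary conditions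
  have hb0 := hS.2.2.2.1 k hk
  have hb1 := hS.2.2.2.2.1 k hk
  -- the linear relation for g 0
  have hkey : g 0 * (1 + d.alpha0 + d.alpha1)
      = d.V - d.dPsi1 - d.dPsi0
        - d.alpha1 * (g m.I - g 0)
        - ∑ i ∈ Finset.range (m.I + 1), m.hp i * (g i - g 0) := by
    have h1 : Psi (k + 1) (m.I + 1) - Psi (k + 1) 0
        = g 0 + ∑ i ∈ Finset.range (m.I + 1), m.hp i * (g i - g 0) := by
      rw [← htel2, hexp]
    simp only [hg] at h1 hb0 hb1 ⊢
    linarith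
  have hg0 : |g 0| ≤ MM d - RR d / d.lam ^ 2 := by
    have habs : |g 0 * (1 + d.alpha0 + d.alpha1)| = |g 0| * (1 + d.alpha0 + d.alpha1) := by
      rw [abs_mul, abs_of_pos (by linarith : (0:ℝ) < 1 + d.alpha0 + d.alpha1)]
    have hrhs : |g 0 * (1 + d.alpha0 + d.alpha1)|
        ≤ |d.V| + |d.dPsi1| + |d.dPsi0| + d.alpha1 * (RR d / d.lam ^ 2) + RR d / d.lam ^ 2 := by
      rw [hkey]
      have h1 := abs_le.mp (hdiff m.I le_rfl)
      have h2 := abs_le.mp hE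
      have h3 := le_abs_self d.V; have h4 := neg_abs_le d.V
      have h5 := le_abs_self d.dPsi0; have h6 := neg_abs_le d.dPsi0
      have h7 := le_abs_self d.dPsi1; have h8 := neg_abs_le d.dPsi1
      rw [abs_le]
      constructor <;> nlinarith [ha1.le]
    have hone : |g 0| ≤ |g 0| * (1 + d.alpha0 + d.alpha1) := by
      nlinarith [abs_nonneg (g 0), ha0.le, ha1.le]
    unfold MM
    nlinarith [ha1.le, div_nonneg (RR_nonneg d) (le_of_lt hlam)]
  intro i hi
  have := hdiff i hi
  have h1 := abs_le.mp this
  have h2 := abs_le.mp hg0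
  rw [abs_le]
  constructor <;> [linarith; linarith]

/-- bounds on the boundary values of the potential. -/
lemma Psi_boundary_bound (ha0 : 0 < d.alpha0) (ha1 : 0 < d.alpha1)
    (hS : Scheme m d T K sol Psi) (hSt : Stable m d K sol)
    {k : ℕ} (hk : k < K) :
    |Psi (k + 1) 0| ≤ X0c d ∧ |d.V - Psi (k + 1) (m.I + 1)| ≤ X1c d := by
  have hb0 := hS.2.2.2.1 k hk
  have hb1 := hS.2.2.2.2.1 k hk
  have hg0 := dPsi_bound d T K m sol Psi ha0 ha1 hS hSt hk 0 (Nat.zero_le _)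
  have hgI := dPsi_bound d T K m sol Psi ha0 ha1 hS hSt hk m.I le_rfl
  have h1 := abs_le.mp hg0
  have h2 := abs_le.mp hgI
  have h3 := le_abs_self d.dPsi0; have h4 := neg_abs_le d.dPsi0
  have h5 := le_abs_self d.dPsi1; have h6 := neg_abs_le d.dPsi1
  constructor
  · rw [abs_le]; unfold X0c
    constructor <;> nlinarith [ha0.le]
  · rw [abs_le]; unfold X1c
    have : d.V - Psi (k + 1) (m.I + 1) = d.dPsi1 + d.alpha1 * dPsiF m (Psi (k + 1)) m.I := by
      linarith
    rw [this]
    constructor <;> nlinarith [ha1.le]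

end DPsi
end Corrosion
namespace Corrosion

section Flux

variable (d : Data) (T : ℝ) (K : ℕ) (m : Mesh)
  (sol : Sp → ℕ → ℕ → ℝ) (Psi : ℕ → ℕ → ℝ)

/-- decomposition of the Scharfetter–Gummel flux. -/
lemma flux_decomp (u : Sp) (P w : ℕ → ℝ) {i : ℕ} (hi : i ≤ m.I) :
    Flux m d u P w i
      = Bern (z u * m.hp i * dPsiF m P i) * (w i - w (i + 1)) / m.hp i
        - z u * dPsiF m P i * w (i + 1) := by
  have hne := (m.hp_pos hi).ne'
  have hBs : Bern (-(z u) * m.hp i * dPsiF m P i)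
      = Bern (z u * m.hp i * dPsiF m P i) + z u * m.hp i * dPsiF m P i := by
    rw [show -(z u) * m.hp i * dPsiF m P i = -(z u * m.hp i * dPsiF m P i) by ring, Bern_sub]
  unfold Flux
  rw [hBs]
  field_simp
  ring

/-- pointwise interior flux bound. -/
lemma flux_abs_bound (ha0 : 0 < d.alpha0) (ha1 : 0 < d.alpha1)
    (hS : Scheme m d T K sol Psi) (hSt : Stable m d K sol)
    {k : ℕ} (hk : k < K) (u : Sp) {i : ℕ} (hi : i ≤ m.I) :
    |Flux m d u (Psi (k + 1)) (sol u (k + 1)) i|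
      ≤ Real.exp (3 * MM d) * |sol u (k + 1) (i + 1) - sol u (k + 1) i| / m.hp i
        + 3 * MM d * UM d := by
  have hMM := MM_nonneg d ha1
  have hg := dPsi_bound d T K m sol Psi ha0 ha1 hS hSt hk i hi
  have hppos := m.hp_pos hi
  have hple := m.hp_le_one hi
  set s := z u * m.hp i * dPsiF m (Psi (k + 1)) i with hs
  have hsabs : |s| ≤ 3 * MM d := by
    rw [hs, abs_mul, abs_mul]
    calc |z u| * |m.hp i| * |dPsiF m (Psi (k + 1)) i| ≤ 3 * 1 * MM d := by
          apply mul_le_mul (mul_le_mul (z_abs u) (by rw [abs_of_pos hppos]; exact hple)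
            (abs_nonneg _) (by norm_num)) hg (abs_nonneg _) (by norm_num)
      _ = 3 * MM d := by ring
  have hBle : Bern s ≤ Real.exp (3 * MM d) :=
    le_trans (Bern_le s) (Real.exp_le_exp.mpr hsabs)
  have hBpos := Bern_pos s
  have hu := hSt u (k + 1) (by omega) (i + 1) (by omega)
  rw [flux_decomp d m u _ _ hi, ← hs]
  calc |Bern s * (sol u (k+1) i - sol u (k+1) (i+1)) / m.hp i
        - z u * dPsiF m (Psi (k+1)) i * sol u (k+1) (i+1)|
      ≤ |Bern s * (sol u (k+1) i - sol u (k+1) (i+1)) / m.hp i|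
        + |z u * dPsiF m (Psi (k+1)) i * sol u (k+1) (i+1)| := abs_sub _ _
    _ ≤ Real.exp (3 * MM d) * |sol u (k + 1) (i + 1) - sol u (k + 1) i| / m.hp i
        + 3 * MM d * UM d := by
        apply add_le_add
        · rw [abs_div, abs_of_pos hppos, abs_mul,
            abs_sub_comm (sol u (k+1) i) (sol u (k+1) (i+1))]
          gcongr ?_ * _ / _
          rw [abs_of_pos hBpos]
          exact hBle
        · rw [abs_mul, abs_mul]
          apply mul_le_mul (mul_le_mul (z_abs u) hg (abs_nonneg _) (by norm_num))
            ?_ (abs_nonneg _) (by positivity)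
          rw [abs_of_nonneg hu.1]
          exact le_trans hu.2 (umax_le_UM d u)

/-- pointwise entropy-dissipation flux bound. -/
lemma flux_mul_bound (ha0 : 0 < d.alpha0) (ha1 : 0 < d.alpha1)
    (hS : Scheme m d T K sol Psi) (hSt : Stable m d K sol)
    {k : ℕ} (hk : k < K) (u : Sp) {i : ℕ} (hi : i ≤ m.I) :
    Flux m d u (Psi (k + 1)) (sol u (k + 1)) i
        * (sol u (k + 1) (i + 1) - sol u (k + 1) i)
      ≤ -(Real.exp (-(3 * MM d)) * (sol u (k + 1) (i + 1) - sol u (k + 1) i) ^ 2 / m.hp i)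
        + 3 * MM d * UM d * |sol u (k + 1) (i + 1) - sol u (k + 1) i| := by
  have hMM := MM_nonneg d ha1
  have hg := dPsi_bound d T K m sol Psi ha0 ha1 hS hSt hk i hi
  have hppos := m.hp_pos hi
  have hple := m.hp_le_one hi
  set s := z u * m.hp i * dPsiF m (Psi (k + 1)) i with hs
  have hsabs : |s| ≤ 3 * MM d := by
    rw [hs, abs_mul, abs_mul]
    calc |z u| * |m.hp i| * |dPsiF m (Psi (k + 1)) i| ≤ 3 * 1 * MM d := by
          apply mul_le_mul (mul_le_mul (z_abs u) (by rw [abs_of_pos hppos]; exact hple)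
            (abs_nonneg _) (by norm_num)) hg (abs_nonneg _) (by norm_num)
      _ = 3 * MM d := by ring
  have hBge : Real.exp (-(3 * MM d)) ≤ Bern s :=
    le_trans (Real.exp_le_exp.mpr (by linarith [neg_abs_le s, abs_nonneg s])) (Bern_ge s)
  have hu := hSt u (k + 1) (by omega) (i + 1) (by omega)
  set a := sol u (k + 1) (i + 1) - sol u (k + 1) i with ha
  rw [flux_decomp d m u _ _ hi, ← hs]
  have e1 : (Bern s * (sol u (k+1) i - sol u (k+1) (i+1)) / m.hp i
      - z u * dPsiF m (Psi (k+1)) i * sol u (k+1) (i+1)) * a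
      = -(Bern s * a ^ 2 / m.hp i) - z u * dPsiF m (Psi (k+1)) i * sol u (k+1) (i+1) * a := by
    rw [ha]; field_simp; ring
  rw [e1]
  apply add_le_add
  · rw [neg_le_neg_iff]
    gcongr
  · calc -(z u * dPsiF m (Psi (k+1)) i * sol u (k+1) (i+1) * a)
        ≤ |z u * dPsiF m (Psi (k+1)) i * sol u (k+1) (i+1) * a| := neg_le_abs _
      _ = |z u| * |dPsiF m (Psi (k+1)) i| * |sol u (k+1) (i+1)| * |a| := by
          rw [abs_mul, abs_mul, abs_mul]
      _ ≤ 3 * MM d * UM d * |a| := by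
          gcongr ?_ * _
          apply mul_le_mul (mul_le_mul (z_abs u) hg (abs_nonneg _) (by norm_num))
            ?_ (abs_nonneg _) (by positivity)
          rw [abs_of_nonneg hu.1]
          exact le_trans hu.2 (umax_le_UM d u)
  
/-- bound on the boundary fluxes. -/
lemma flux_boundary_bound (ha0 : 0 < d.alpha0) (ha1 : 0 < d.alpha1)
    (hS : Scheme m d T K sol Psi) (hSt : Stable m d K sol)
    {k : ℕ} (hk : k < K) (u : Sp) :
    |Flux m d u (Psi (k + 1)) (sol u (k + 1)) 0| ≤ Cb d ∧
      |Flux m d u (Psi (k + 1)) (sol u (k + 1)) m.I| ≤ Cb d := by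
  obtain ⟨hP0, hP1⟩ := Psi_boundary_bound d T K m sol Psi ha0 ha1 hS hSt hk
  have hX0 := X0c_nonneg d ha0 ha1
  have hX1 := X1c_nonneg d ha1
  have hUM := UM_pos d
  have hbc0 := hS.2.2.2.2.2.1 u k hk
  have hbc1 := hS.2.2.2.2.2.2 u k hk
  have hu0 := hSt u (k + 1) (by omega) 0 (by omega)
  have huI := hSt u (k + 1) (by omega) (m.I + 1) le_rfl
  have hb0m := (d.b0_mem u); have ha0m := (d.a0_mem u)
  have hb1m := (d.b1_mem u); have ha1m := (d.a1_mem u)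
  have hz := z_abs u
  -- generic: each exponential is ≤ exp (3 * X)
  have hexp0a : Real.exp (-(z u) * d.b0 u * Psi (k+1) 0) ≤ Real.exp (3 * (X0c d + X1c d)) := by
    apply le_trans (exp_mul3_le (A := 3) (B := 1) (C := X0c d)
      (by rwa [abs_neg]) (by rw [abs_of_nonneg hb0m.1]; exact hb0m.2) hP0)
    apply Real.exp_le_exp.mpr; nlinarith
  have hexp0b : Real.exp (z u * d.a0 u * Psi (k+1) 0) ≤ Real.exp (3 * (X0c d + X1c d)) := by
    apply le_trans (exp_mul3_le (A := 3) (B := 1) (C := X0c d)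
      hz (by rw [abs_of_nonneg ha0m.1]; exact ha0m.2) hP0)
    apply Real.exp_le_exp.mpr; nlinarith
  have hexp1a : Real.exp (-(z u) * d.b1 u * (d.V - Psi (k+1) (m.I+1)))
      ≤ Real.exp (3 * (X0c d + X1c d)) := by
    apply le_trans (exp_mul3_le (A := 3) (B := 1) (C := X1c d)
      (by rwa [abs_neg]) (by rw [abs_of_nonneg hb1m.1]; exact hb1m.2) hP1)
    apply Real.exp_le_exp.mpr; nlinarith
  have hexp1b : Real.exp (z u * d.a1 u * (d.V - Psi (k+1) (m.I+1)))
      ≤ Real.exp (3 * (X0c d + X1c d)) := by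
    apply le_trans (exp_mul3_le (A := 3) (B := 1) (C := X1c d)
      hz (by rw [abs_of_nonneg ha1m.1]; exact ha1m.2) hP1)
    apply Real.exp_le_exp.mpr; nlinarith
  have hm0 := d.m0_pos u; have hk0 := d.k0_pos u
  have hm1 := d.m1_pos u; have hk1 := d.k1_pos u
  have humax := d.umax_pos u
  have humle := umax_le_UM d u
  have hco : 2 * d.m0 u + d.k0 u ≤ COc d ∧ d.m1 u + 2 * d.k1 u ≤ COc d := by
    have := d.m0_pos Sp.P; have := d.m0_pos Sp.N
    have := d.k0_pos Sp.P; have := d.k0_pos Sp.N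
    have := d.m1_pos Sp.P; have := d.m1_pos Sp.N
    have := d.k1_pos Sp.P; have := d.k1_pos Sp.N
    unfold COc; cases u <;> constructor <;> linarith
  constructor
  · -- F 0 = gamma0 - beta0 * u0
    have hF0 : Flux m d u (Psi (k + 1)) (sol u (k + 1)) 0
        = d.gamma0 u (Psi (k+1) 0) - d.beta0 u (Psi (k+1) 0) * sol u (k+1) 0 := by
      linarith [hbc0]
    rw [hF0]
    have hbeta : 0 ≤ d.beta0 u (Psi (k+1) 0) := by
      unfold Data.beta0; positivity
    have hgamma : 0 ≤ d.gamma0 u (Psi (k+1) 0) := by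
      unfold Data.gamma0; positivity
    have h1 : d.gamma0 u (Psi (k+1) 0) ≤ d.m0 u * UM d * Real.exp (3 * (X0c d + X1c d)) := by
      unfold Data.gamma0
      apply mul_le_mul (by nlinarith) hexp0a (Real.exp_pos _).le (by positivity)
    have h2 : d.beta0 u (Psi (k+1) 0) * sol u (k+1) 0
        ≤ (d.m0 u + d.k0 u) * UM d * Real.exp (3 * (X0c d + X1c d)) := by
      have hb : d.beta0 u (Psi (k+1) 0)
          ≤ (d.m0 u + d.k0 u) * Real.exp (3 * (X0c d + X1c d)) := by
        unfold Data.beta0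
        calc d.m0 u * Real.exp (-(z u) * d.b0 u * Psi (k+1) 0)
              + d.k0 u * Real.exp (z u * d.a0 u * Psi (k+1) 0)
            ≤ d.m0 u * Real.exp (3 * (X0c d + X1c d))
              + d.k0 u * Real.exp (3 * (X0c d + X1c d)) := by
              apply add_le_add <;> gcongr
          _ = (d.m0 u + d.k0 u) * Real.exp (3 * (X0c d + X1c d)) := by ring
      calc d.beta0 u (Psi (k+1) 0) * sol u (k+1) 0
          ≤ ((d.m0 u + d.k0 u) * Real.exp (3 * (X0c d + X1c d))) * UM d := by
            apply mul_le_mul hb (le_trans hu0.2 humle) hu0.1 (by positivity)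
        _ = (d.m0 u + d.k0 u) * UM d * Real.exp (3 * (X0c d + X1c d)) := by ring
    have hs0 : 0 ≤ d.beta0 u (Psi (k+1) 0) * sol u (k+1) 0 := mul_nonneg hbeta hu0.1
    have hEe : (0:ℝ) ≤ UM d * Real.exp (3 * (X0c d + X1c d)) := by positivity
    have key1 : d.m0 u * UM d * Real.exp (3 * (X0c d + X1c d)) ≤ Cb d := by
      unfold Cb
      have hle : d.m0 u ≤ COc d := by linarith [hco.1]
      calc d.m0 u * UM d * Real.exp (3 * (X0c d + X1c d))
          = d.m0 u * (UM d * Real.exp (3 * (X0c d + X1c d))) := by ring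
        _ ≤ COc d * (UM d * Real.exp (3 * (X0c d + X1c d))) :=
            mul_le_mul_of_nonneg_right hle hEe
        _ = COc d * UM d * Real.exp (3 * (X0c d + X1c d)) := by ring
    have key2 : (d.m0 u + d.k0 u) * UM d * Real.exp (3 * (X0c d + X1c d)) ≤ Cb d := by
      unfold Cb
      have hle : d.m0 u + d.k0 u ≤ COc d := by linarith [hco.1]
      calc (d.m0 u + d.k0 u) * UM d * Real.exp (3 * (X0c d + X1c d))
          = (d.m0 u + d.k0 u) * (UM d * Real.exp (3 * (X0c d + X1c d))) := by ring
        _ ≤ COc d * (UM d * Real.exp (3 * (X0c d + X1c d))) :=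
            mul_le_mul_of_nonneg_right hle hEe
        _ = COc d * UM d * Real.exp (3 * (X0c d + X1c d)) := by ring
    rw [abs_le]
    constructor <;> linarith
  · rw [hbc1]
    have hbeta : 0 ≤ d.beta1 u (d.V - Psi (k+1) (m.I+1)) := by
      unfold Data.beta1; positivity
    have hgamma : 0 ≤ d.gamma1 u (d.V - Psi (k+1) (m.I+1)) := by
      unfold Data.gamma1; positivity
    have h1 : d.gamma1 u (d.V - Psi (k+1) (m.I+1))
        ≤ d.k1 u * UM d * Real.exp (3 * (X0c d + X1c d)) := by
      unfold Data.gamma1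
      apply mul_le_mul (by nlinarith) hexp1b (Real.exp_pos _).le (by positivity)
    have h2 : d.beta1 u (d.V - Psi (k+1) (m.I+1)) * sol u (k+1) (m.I+1)
        ≤ (d.m1 u + d.k1 u) * UM d * Real.exp (3 * (X0c d + X1c d)) := by
      have hb : d.beta1 u (d.V - Psi (k+1) (m.I+1))
          ≤ (d.m1 u + d.k1 u) * Real.exp (3 * (X0c d + X1c d)) := by
        unfold Data.beta1
        calc d.m1 u * Real.exp (-(z u) * d.b1 u * (d.V - Psi (k+1) (m.I+1)))
              + d.k1 u * Real.exp (z u * d.a1 u * (d.V - Psi (k+1) (m.I+1)))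
            ≤ d.m1 u * Real.exp (3 * (X0c d + X1c d))
              + d.k1 u * Real.exp (3 * (X0c d + X1c d)) := by
              apply add_le_add <;> gcongr
          _ = (d.m1 u + d.k1 u) * Real.exp (3 * (X0c d + X1c d)) := by ring
      calc d.beta1 u (d.V - Psi (k+1) (m.I+1)) * sol u (k+1) (m.I+1)
          ≤ ((d.m1 u + d.k1 u) * Real.exp (3 * (X0c d + X1c d))) * UM d := by
            apply mul_le_mul hb (le_trans huI.2 humle) huI.1 (by positivity)
        _ = (d.m1 u + d.k1 u) * UM d * Real.exp (3 * (X0c d + X1c d)) := by ring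
    have hs0 : 0 ≤ d.beta1 u (d.V - Psi (k+1) (m.I+1)) * sol u (k+1) (m.I+1) :=
      mul_nonneg hbeta huI.1
    have hEe : (0:ℝ) ≤ UM d * Real.exp (3 * (X0c d + X1c d)) := by positivity
    have key1 : d.k1 u * UM d * Real.exp (3 * (X0c d + X1c d)) ≤ Cb d := by
      unfold Cb
      have hle : d.k1 u ≤ COc d := by linarith [hco.2]
      calc d.k1 u * UM d * Real.exp (3 * (X0c d + X1c d))
          = d.k1 u * (UM d * Real.exp (3 * (X0c d + X1c d))) := by ring
        _ ≤ COc d * (UM d * Real.exp (3 * (X0c d + X1c d))) :=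
            mul_le_mul_of_nonneg_right hle hEe
        _ = COc d * UM d * Real.exp (3 * (X0c d + X1c d)) := by ring
    have key2 : (d.m1 u + d.k1 u) * UM d * Real.exp (3 * (X0c d + X1c d)) ≤ Cb d := by
      unfold Cb
      have hle : d.m1 u + d.k1 u ≤ COc d := by linarith [hco.2]
      calc (d.m1 u + d.k1 u) * UM d * Real.exp (3 * (X0c d + X1c d))
          = (d.m1 u + d.k1 u) * (UM d * Real.exp (3 * (X0c d + X1c d))) := by ring
        _ ≤ COc d * (UM d * Real.exp (3 * (X0c d + X1c d))) :=
            mul_le_mul_of_nonneg_right hle hEe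
        _ = COc d * UM d * Real.exp (3 * (X0c d + X1c d)) := by ring
    rw [abs_le]
    constructor <;> linarith

end Flux
end Corrosion
namespace Corrosion

/-- constant in the discrete energy estimate. -/
def C2c (d : Data) : ℝ :=
  (3 * MM d * UM d) ^ 2 / (2 * Real.exp (-(3 * MM d))) + 2 * Cb d * UM d

lemma C2c_nonneg (d : Data) (ha1 : 0 < d.alpha1) : 0 ≤ C2c d := by
  have h1 : 0 ≤ (3 * MM d * UM d) ^ 2 / (2 * Real.exp (-(3 * MM d))) := by positivity
  have h2 : 0 ≤ 2 * Cb d * UM d := by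
    have := Cb_pos d; have := UM_pos d; positivity
  unfold C2c; linarith

lemma young_aux {b c s : ℝ} (hb : 0 < b) : c * s ≤ b / 2 * s ^ 2 + c ^ 2 / (2 * b) := by
  rw [← sub_nonneg]
  have e : b / 2 * s ^ 2 + c ^ 2 / (2 * b) - c * s = (b * s - c) ^ 2 / (2 * b) := by
    field_simp; ring
  rw [e]; positivity

section Steps

variable (d : Data) (T : ℝ) (K : ℕ) (m : Mesh)
  (sol : Sp → ℕ → ℕ → ℝ) (Psi : ℕ → ℕ → ℝ)

lemma weak_form (heps : 0 < d.eps) (hS : Scheme m d T K sol Psi)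
    {k : ℕ} (hk : k < K) (u : Sp) (v : ℕ → ℝ) :
    ∑ i ∈ Finset.Icc 1 m.I, m.h i * ((sol u (k + 1) i - sol u k i) / (T / K) * v i)
      = (d.epsu u)⁻¹ *
        ((∑ i ∈ Finset.range (m.I + 1),
            Flux m d u (Psi (k + 1)) (sol u (k + 1)) i * (v (i + 1) - v i))
          + Flux m d u (Psi (k + 1)) (sol u (k + 1)) 0 * v 0
          - Flux m d u (Psi (k + 1)) (sol u (k + 1)) m.I * v (m.I + 1)) := by
  set F : ℕ → ℝ := fun i => Flux m d u (Psi (k + 1)) (sol u (k + 1)) i with hF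
  have heu := epsu_pos d heps u
  have hterm : ∀ i ∈ Finset.Icc 1 m.I,
      m.h i * ((sol u (k + 1) i - sol u k i) / (T / K) * v i)
        = (d.epsu u)⁻¹ * (-((F i - F (i - 1)) * v i)) := by
    intro i hi
    rw [Finset.mem_Icc] at hi
    have hs := hS.2.2.1 u k hk i hi.1 hi.2
    have hstep : F i - F (i - 1)
        = -(d.epsu u * m.h i * (sol u (k + 1) i - sol u k i) / (T / K)) := by
      simp only [hF]; linarith
    rw [hstep]
    have e : -(-(d.epsu u * m.h i * (sol u (k + 1) i - sol u k i) / (T / K)) * v i)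
        = d.epsu u * (m.h i * ((sol u (k + 1) i - sol u k i) / (T / K) * v i)) := by ring
    rw [e, inv_mul_cancel_left₀ heu.ne']
  rw [Finset.sum_congr rfl hterm, ← Finset.mul_sum]
  congr 1
  rw [Finset.sum_neg_distrib, sum_by_parts F v m.I]
  ring

lemma step_dual (heps : 0 < d.eps) (ha0 : 0 < d.alpha0) (ha1 : 0 < d.alpha1)
    (hS : Scheme m d T K sol Psi) (hSt : Stable m d K sol)
    {k : ℕ} (hk : k < K) (u : Sp) :
    0 ≤ m.normDual (fun i => (sol u (k + 1) i - sol u k i) / (T / K)) ∧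
    m.normDual (fun i => (sol u (k + 1) i - sol u k i) / (T / K))
      ≤ (min 1 d.eps)⁻¹ *
        (Real.exp (3 * MM d) *
          Real.sqrt (∑ i ∈ Finset.range (m.I + 1),
            (sol u (k + 1) (i + 1) - sol u (k + 1) i) ^ 2 / m.hp i)
          + (3 * MM d * UM d + 2 * Cb d)) := by
  set w : ℕ → ℝ := fun i => (sol u (k + 1) i - sol u k i) / (T / K) with hw
  set su : ℕ → ℝ := sol u (k + 1) with hsu
  set F : ℕ → ℝ := fun i => Flux m d u (Psi (k + 1)) (sol u (k + 1)) i with hF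
  set Dsq : ℝ := ∑ i ∈ Finset.range (m.I + 1), (su (i + 1) - su i) ^ 2 / m.hp i with hDsq
  set G : ℝ := (min 1 d.eps)⁻¹ *
    (Real.exp (3 * MM d) * Real.sqrt Dsq + (3 * MM d * UM d + 2 * Cb d)) with hG
  have hMM := MM_nonneg d ha1
  have hUM := UM_pos d
  have hCb := Cb_pos d
  have hemin : (0:ℝ) < min 1 d.eps := lt_min one_pos heps
  have hDsq0 : 0 ≤ Dsq := m.sum_sq_div_nonneg _
  have hG0 : 0 ≤ G := by
    have : 0 ≤ Real.exp (3 * MM d) * Real.sqrt Dsq := by positivity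
    have h2 : 0 ≤ 3 * MM d * UM d + 2 * Cb d := by positivity
    positivity
  have hub : ∀ r ∈ {r : ℝ | ∃ v : ℕ → ℝ, m.norm1sq v ≤ 1 ∧
      r = ∫ x in Set.Ioo (0:ℝ) 1, m.pw w x * m.pw v x}, r ≤ G := by
    rintro r ⟨v, hv, rfl⟩
    rw [m.integral_pw_mul]
    -- decompose the discrete H¹ norm bound on v
    have hvsum : ∑ i ∈ Finset.range (m.I + 1), (v (i + 1) - v i) ^ 2 / m.hp i ≤ 1 := by
      have h0 := sq_nonneg (v 0)
      have h1 := sq_nonneg (v (m.I + 1))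
      unfold Mesh.norm1sq at hv
      linarith
    have hv0 : |v 0| ≤ 1 := by
      have h1 := sq_nonneg (v (m.I + 1))
      have h2 := m.sum_sq_div_nonneg (fun i => v (i + 1) - v i)
      unfold Mesh.norm1sq at hv
      rw [← Real.sqrt_one, ← Real.sqrt_sq_eq_abs]
      exact Real.sqrt_le_sqrt (by linarith)
    have hvI : |v (m.I + 1)| ≤ 1 := by
      have h1 := sq_nonneg (v 0)
      have h2 := m.sum_sq_div_nonneg (fun i => v (i + 1) - v i)
      unfold Mesh.norm1sq at hv
      rw [← Real.sqrt_one, ← Real.sqrt_sq_eq_abs]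
      exact Real.sqrt_le_sqrt (by linarith)
    have hsqv : Real.sqrt (∑ i ∈ Finset.range (m.I + 1), (v (i + 1) - v i) ^ 2 / m.hp i)
        ≤ 1 := by
      rw [← Real.sqrt_one]
      exact Real.sqrt_le_sqrt hvsum
    have hsqv0 : 0 ≤ Real.sqrt (∑ i ∈ Finset.range (m.I + 1), (v (i + 1) - v i) ^ 2 / m.hp i) :=
      Real.sqrt_nonneg _
    -- the weak formulation
    have hwf := weak_form d T K m sol Psi heps hS hk u v
    have hsum_eq : ∑ i ∈ Finset.Icc 1 m.I, m.h i * (w i * v i)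
        = ∑ i ∈ Finset.Icc 1 m.I, m.h i * ((sol u (k + 1) i - sol u k i) / (T / K) * v i) := by
      rfl
    rw [hsum_eq, hwf]
    -- bound the flux sum
    have hterm : ∀ i ∈ Finset.range (m.I + 1),
        |F i * (v (i + 1) - v i)|
          ≤ Real.exp (3 * MM d) * (|su (i + 1) - su i| * |v (i + 1) - v i| / m.hp i)
            + 3 * MM d * UM d * |v (i + 1) - v i| := by
      intro i hi
      rw [Finset.mem_range, Nat.lt_succ_iff] at hi
      rw [abs_mul]
      calc |F i| * |v (i + 1) - v i|
          ≤ (Real.exp (3 * MM d) * |su (i + 1) - su i| / m.hp i + 3 * MM d * UM d)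
              * |v (i + 1) - v i| :=
            mul_le_mul_of_nonneg_right
              (flux_abs_bound d T K m sol Psi ha0 ha1 hS hSt hk u hi) (abs_nonneg _)
        _ = Real.exp (3 * MM d) * (|su (i + 1) - su i| * |v (i + 1) - v i| / m.hp i)
            + 3 * MM d * UM d * |v (i + 1) - v i| := by ring
    have hflux_sum : |∑ i ∈ Finset.range (m.I + 1), F i * (v (i + 1) - v i)|
        ≤ Real.exp (3 * MM d) * Real.sqrt Dsq + 3 * MM d * UM d := by
      calc |∑ i ∈ Finset.range (m.I + 1), F i * (v (i + 1) - v i)|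
          ≤ ∑ i ∈ Finset.range (m.I + 1), |F i * (v (i + 1) - v i)| :=
            Finset.abs_sum_le_sum_abs _ _
        _ ≤ ∑ i ∈ Finset.range (m.I + 1),
              (Real.exp (3 * MM d) * (|su (i + 1) - su i| * |v (i + 1) - v i| / m.hp i)
                + 3 * MM d * UM d * |v (i + 1) - v i|) := Finset.sum_le_sum hterm
        _ = Real.exp (3 * MM d)
              * ∑ i ∈ Finset.range (m.I + 1), |su (i + 1) - su i| * |v (i + 1) - v i| / m.hp i
            + 3 * MM d * UM d * ∑ i ∈ Finset.range (m.I + 1), |v (i + 1) - v i| := by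
            rw [Finset.sum_add_distrib, ← Finset.mul_sum, ← Finset.mul_sum]
        _ ≤ Real.exp (3 * MM d)
              * (Real.sqrt Dsq
                * Real.sqrt (∑ i ∈ Finset.range (m.I + 1), (v (i + 1) - v i) ^ 2 / m.hp i))
            + 3 * MM d * UM d
              * Real.sqrt (∑ i ∈ Finset.range (m.I + 1), (v (i + 1) - v i) ^ 2 / m.hp i) := by
            apply add_le_add
            · exact mul_le_mul_of_nonneg_left
                (m.cs2 (fun i => su (i + 1) - su i) (fun i => v (i + 1) - v i))
                (Real.exp_pos _).le
            · exact mul_le_mul_of_nonneg_left (m.cs1 (fun i => v (i + 1) - v i))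
                (by positivity)
        _ ≤ Real.exp (3 * MM d) * Real.sqrt Dsq + 3 * MM d * UM d := by
            apply add_le_add
            · rw [← mul_assoc]
              calc Real.exp (3 * MM d) * Real.sqrt Dsq
                    * Real.sqrt (∑ i ∈ Finset.range (m.I + 1), (v (i + 1) - v i) ^ 2 / m.hp i)
                  ≤ Real.exp (3 * MM d) * Real.sqrt Dsq * 1 :=
                    mul_le_mul_of_nonneg_left hsqv (by positivity)
                _ = Real.exp (3 * MM d) * Real.sqrt Dsq := by ring
            · calc 3 * MM d * UM d
                    * Real.sqrt (∑ i ∈ Finset.range (m.I + 1), (v (i + 1) - v i) ^ 2 / m.hp i)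
                  ≤ 3 * MM d * UM d * 1 := mul_le_mul_of_nonneg_left hsqv (by positivity)
                _ = 3 * MM d * UM d := by ring
    obtain ⟨hb0, hbI⟩ := flux_boundary_bound d T K m sol Psi ha0 ha1 hS hSt hk u
    have hbdr0 : |F 0 * v 0| ≤ Cb d := by
      rw [abs_mul]
      calc |F 0| * |v 0| ≤ Cb d * 1 :=
          mul_le_mul hb0 hv0 (abs_nonneg _) hCb.le
        _ = Cb d := by ring
    have hbdrI : |F m.I * v (m.I + 1)| ≤ Cb d := by
      rw [abs_mul]
      calc |F m.I| * |v (m.I + 1)| ≤ Cb d * 1 :=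
          mul_le_mul hbI hvI (abs_nonneg _) hCb.le
        _ = Cb d := by ring
    -- total bound
    have hW : |(∑ i ∈ Finset.range (m.I + 1), F i * (v (i + 1) - v i))
        + F 0 * v 0 - F m.I * v (m.I + 1)|
        ≤ Real.exp (3 * MM d) * Real.sqrt Dsq + (3 * MM d * UM d + 2 * Cb d) := by
      calc |(∑ i ∈ Finset.range (m.I + 1), F i * (v (i + 1) - v i))
            + F 0 * v 0 - F m.I * v (m.I + 1)|
          ≤ |(∑ i ∈ Finset.range (m.I + 1), F i * (v (i + 1) - v i)) + F 0 * v 0|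
            + |F m.I * v (m.I + 1)| := abs_sub _ _
        _ ≤ |∑ i ∈ Finset.range (m.I + 1), F i * (v (i + 1) - v i)| + |F 0 * v 0|
            + |F m.I * v (m.I + 1)| := by
            have := abs_add_le (∑ i ∈ Finset.range (m.I + 1), F i * (v (i + 1) - v i)) (F 0 * v 0)
            linarith
        _ ≤ Real.exp (3 * MM d) * Real.sqrt Dsq + (3 * MM d * UM d + 2 * Cb d) := by
            linarith
    have hinv_le : (d.epsu u)⁻¹ ≤ (min 1 d.eps)⁻¹ :=
      one_div (d.epsu u) ▸ one_div (min 1 d.eps) ▸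
        one_div_le_one_div_of_le hemin (epsu_ge d heps u)
    have heu := epsu_pos d heps u
    calc (d.epsu u)⁻¹ * ((∑ i ∈ Finset.range (m.I + 1), F i * (v (i + 1) - v i))
            + F 0 * v 0 - F m.I * v (m.I + 1))
        ≤ (d.epsu u)⁻¹ * |(∑ i ∈ Finset.range (m.I + 1), F i * (v (i + 1) - v i))
            + F 0 * v 0 - F m.I * v (m.I + 1)| :=
          mul_le_mul_of_nonneg_left (le_abs_self _) (by positivity)
      _ ≤ (min 1 d.eps)⁻¹ * (Real.exp (3 * MM d) * Real.sqrt Dsq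
            + (3 * MM d * UM d + 2 * Cb d)) := by
          apply mul_le_mul hinv_le hW (abs_nonneg _) (by positivity)
  have hzero : (0:ℝ) ∈ {r : ℝ | ∃ v : ℕ → ℝ, m.norm1sq v ≤ 1 ∧
      r = ∫ x in Set.Ioo (0:ℝ) 1, m.pw w x * m.pw v x} := by
    refine ⟨fun _ => 0, ?_, ?_⟩
    · unfold Mesh.norm1sq; simp
    · have : ∀ x, m.pw (fun _ => (0:ℝ)) x = 0 := by
        intro x; unfold Mesh.pw; split_ifs <;> rfl
      simp [this]
  constructor
  · exact le_csSup ⟨G, fun r hr => hub r hr⟩ hzero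
  · exact Real.sSup_le hub hG0

lemma step_energy (heps : 0 < d.eps) (hT : 0 < T) (hK : 1 ≤ K)
    (ha0 : 0 < d.alpha0) (ha1 : 0 < d.alpha1)
    (hS : Scheme m d T K sol Psi) (hSt : Stable m d K sol)
    {k : ℕ} (hk : k < K) (u : Sp) :
    d.epsu u * (m.norm0sq (sol u (k + 1)) - m.norm0sq (sol u k)) / 2
      + Real.exp (-(3 * MM d)) / 2 *
        ((T / K) * ∑ i ∈ Finset.range (m.I + 1),
          (sol u (k + 1) (i + 1) - sol u (k + 1) i) ^ 2 / m.hp i)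
      ≤ (T / K) * C2c d := by
  have hKpos : (0:ℝ) < K := by exact_mod_cast Nat.lt_of_lt_of_le Nat.zero_lt_one hK
  have hdt : (0:ℝ) < T / K := div_pos hT hKpos
  set su : ℕ → ℝ := sol u (k + 1) with hsu
  set F : ℕ → ℝ := fun i => Flux m d u (Psi (k + 1)) (sol u (k + 1)) i with hF
  set Dsq : ℝ := ∑ i ∈ Finset.range (m.I + 1), (su (i + 1) - su i) ^ 2 / m.hp i with hDsq
  set b0 : ℝ := Real.exp (-(3 * MM d)) with hb0def
  have hb0 : (0:ℝ) < b0 := Real.exp_pos _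
  have hMM := MM_nonneg d ha1
  have hUM := UM_pos d
  have hCb := Cb_pos d
  have heu := epsu_pos d heps u
  have hDsq0 : 0 ≤ Dsq := m.sum_sq_div_nonneg _
  -- weak form with v = su
  have hwf := weak_form d T K m sol Psi heps hS hk u su
  set W : ℝ := (∑ i ∈ Finset.range (m.I + 1), F i * (su (i + 1) - su i))
    + F 0 * su 0 - F m.I * su (m.I + 1) with hW
  -- chain rule inequality
  have hQ : m.norm0sq (sol u (k + 1)) - m.norm0sq (sol u k)
      ≤ 2 * (T / K) * ∑ i ∈ Finset.Icc 1 m.I,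
          m.h i * ((sol u (k + 1) i - sol u k i) / (T / K) * su i) := by
    unfold Mesh.norm0sq
    rw [← Finset.sum_sub_distrib, Finset.mul_sum]
    apply Finset.sum_le_sum
    intro i hi
    rw [Finset.mem_Icc] at hi
    have hh := (m.h_pos hi.1 hi.2).le
    have e : 2 * (T / K) * (m.h i * ((sol u (k + 1) i - sol u k i) / (T / K) * su i))
        = 2 * m.h i * ((sol u (k + 1) i - sol u k i) * su i) := by
      field_simp
    rw [e]
    have hsq := sq_nonneg (sol u (k + 1) i - sol u k i)
    have := mul_nonneg hh hsq
    simp only [hsu]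
    nlinarith
  -- flux dissipation bound
  have hflux : ∑ i ∈ Finset.range (m.I + 1), F i * (su (i + 1) - su i)
      ≤ -(b0 * Dsq) + 3 * MM d * UM d * Real.sqrt Dsq := by
    have habs : ∑ i ∈ Finset.range (m.I + 1), |su (i + 1) - su i| ≤ Real.sqrt Dsq :=
      m.cs1 (fun i => su (i + 1) - su i)
    calc ∑ i ∈ Finset.range (m.I + 1), F i * (su (i + 1) - su i)
        ≤ ∑ i ∈ Finset.range (m.I + 1),
            (-(b0 * (su (i + 1) - su i) ^ 2 / m.hp i)
              + 3 * MM d * UM d * |su (i + 1) - su i|) := by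
          apply Finset.sum_le_sum
          intro i hi
          rw [Finset.mem_range, Nat.lt_succ_iff] at hi
          exact flux_mul_bound d T K m sol Psi ha0 ha1 hS hSt hk u hi
      _ = -(b0 * Dsq) + 3 * MM d * UM d
            * ∑ i ∈ Finset.range (m.I + 1), |su (i + 1) - su i| := by
          rw [Finset.sum_add_distrib, ← Finset.mul_sum, Finset.sum_neg_distrib]
          congr 2
          rw [hDsq, Finset.mul_sum]
          apply Finset.sum_congr rfl; intro i _; rw [mul_div_assoc]
      _ ≤ -(b0 * Dsq) + 3 * MM d * UM d * Real.sqrt Dsq := by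
          have : 0 ≤ 3 * MM d * UM d := by positivity
          nlinarith
  -- boundary terms
  obtain ⟨hbd0, hbdI⟩ := flux_boundary_bound d T K m sol Psi ha0 ha1 hS hSt hk u
  have hu0 := hSt u (k + 1) (by omega) 0 (by omega)
  have huI := hSt u (k + 1) (by omega) (m.I + 1) le_rfl
  have hbdr0 : F 0 * su 0 ≤ Cb d * UM d := by
    calc F 0 * su 0 ≤ |F 0 * su 0| := le_abs_self _
      _ = |F 0| * |su 0| := abs_mul _ _
      _ ≤ Cb d * UM d := by
          apply mul_le_mul hbd0 ?_ (abs_nonneg _) hCb.le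
          rw [abs_of_nonneg hu0.1]
          exact le_trans hu0.2 (umax_le_UM d u)
  have hbdrI : -(F m.I * su (m.I + 1)) ≤ Cb d * UM d := by
    calc -(F m.I * su (m.I + 1)) ≤ |F m.I * su (m.I + 1)| := neg_le_abs _
      _ = |F m.I| * |su (m.I + 1)| := abs_mul _ _
      _ ≤ Cb d * UM d := by
          apply mul_le_mul hbdI ?_ (abs_nonneg _) hCb.le
          rw [abs_of_nonneg huI.1]
          exact le_trans huI.2 (umax_le_UM d u)
  -- Young's inequality
  have hyoung : 3 * MM d * UM d * Real.sqrt Dsq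
      ≤ b0 / 2 * Dsq + (3 * MM d * UM d) ^ 2 / (2 * b0) := by
    have := young_aux (b := b0) (c := 3 * MM d * UM d) (s := Real.sqrt Dsq) hb0
    rwa [Real.sq_sqrt hDsq0] at this
  have hWle : W ≤ -(b0 / 2 * Dsq) + C2c d := by
    unfold C2c
    rw [hW, ← hb0def]
    linarith
  -- put the pieces together
  have hmain : d.epsu u * (m.norm0sq (sol u (k + 1)) - m.norm0sq (sol u k)) / 2
      ≤ (T / K) * W := by
    have h1 : d.epsu u * (m.norm0sq (sol u (k + 1)) - m.norm0sq (sol u k)) / 2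
        ≤ d.epsu u * (2 * (T / K) * ((d.epsu u)⁻¹ * W)) / 2 := by
      rw [hwf] at hQ
      gcongr d.epsu u * ?_ / 2
    have h2 : d.epsu u * (2 * (T / K) * ((d.epsu u)⁻¹ * W)) / 2 = (T / K) * W := by
      field_simp
    linarith
  have hfin : (T / K) * W ≤ (T / K) * (-(b0 / 2 * Dsq) + C2c d) :=
    mul_le_mul_of_nonneg_left hWle hdt.le
  have hexpand : (T / K) * (-(b0 / 2 * Dsq) + C2c d)
      = -(b0 / 2 * ((T / K) * Dsq)) + (T / K) * C2c d := by ring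
  rw [hexpand] at hfin
  have : b0 / 2 * ((T / K) * Dsq) = Real.exp (-(3 * MM d)) / 2 * ((T / K) * Dsq) := by
    rw [hb0def]
  linarith

end Steps
end Corrosion
namespace Corrosion

/-- constant in the discrete `L²(H¹)` estimate. -/
def C3c (d : Data) (T : ℝ) : ℝ :=
  (max 1 d.eps * UM d ^ 2 + 2 * T * C2c d) / Real.exp (-(3 * MM d))

lemma C3c_nonneg (d : Data) (ha1 : 0 < d.alpha1) (T : ℝ) (hT : 0 < T) : 0 ≤ C3c d T := by
  have h1 : (0:ℝ) ≤ max 1 d.eps := le_trans zero_le_one (le_max_left _ _)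
  have h2 := C2c_nonneg d ha1
  have h3 := (UM_pos d).le
  unfold C3c
  apply div_nonneg ?_ (Real.exp_pos _).le
  nlinarith

section Total

variable (d : Data) (T : ℝ) (K : ℕ) (m : Mesh)
  (sol : Sp → ℕ → ℕ → ℝ) (Psi : ℕ → ℕ → ℝ)

lemma energy_total (heps : 0 < d.eps) (hT : 0 < T) (hK : 1 ≤ K)
    (ha0 : 0 < d.alpha0) (ha1 : 0 < d.alpha1)
    (hS : Scheme m d T K sol Psi) (hSt : Stable m d K sol) (u : Sp) :
    ∑ k ∈ Finset.range K, (T / K) * ∑ i ∈ Finset.range (m.I + 1),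
        (sol u (k + 1) (i + 1) - sol u (k + 1) i) ^ 2 / m.hp i
      ≤ C3c d T := by
  have hKpos : (0:ℝ) < K := by exact_mod_cast Nat.lt_of_lt_of_le Nat.zero_lt_one hK
  set b0 : ℝ := Real.exp (-(3 * MM d)) with hb0def
  have hb0 : (0:ℝ) < b0 := Real.exp_pos _
  have heu := epsu_pos d heps u
  set Q : ℕ → ℝ := fun k => m.norm0sq (sol u k) with hQdef
  set Dsq : ℕ → ℝ := fun k => ∑ i ∈ Finset.range (m.I + 1),
      (sol u (k + 1) (i + 1) - sol u (k + 1) i) ^ 2 / m.hp i with hDsqdef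
  -- sum the per-step energy estimates
  have hsum : ∑ k ∈ Finset.range K,
      (d.epsu u * (Q (k + 1) - Q k) / 2 + b0 / 2 * ((T / K) * Dsq k))
        ≤ ∑ k ∈ Finset.range K, (T / K) * C2c d := by
    apply Finset.sum_le_sum
    intro k hk
    rw [Finset.mem_range] at hk
    exact step_energy d T K m sol Psi heps hT hK ha0 ha1 hS hSt hk u
  rw [Finset.sum_add_distrib] at hsum
  have htel : ∑ k ∈ Finset.range K, d.epsu u * (Q (k + 1) - Q k) / 2
      = d.epsu u / 2 * (Q K - Q 0) := by
    have : ∀ k ∈ Finset.range K, d.epsu u * (Q (k + 1) - Q k) / 2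
        = d.epsu u / 2 * (Q (k + 1) - Q k) := by intro k _; ring
    rw [Finset.sum_congr rfl this, ← Finset.mul_sum, Finset.sum_range_sub]
  have hpull : ∑ k ∈ Finset.range K, b0 / 2 * ((T / K) * Dsq k)
      = b0 / 2 * ∑ k ∈ Finset.range K, (T / K) * Dsq k := by
    rw [Finset.mul_sum]
  have hconst : ∑ k ∈ Finset.range K, (T / K) * C2c d = T * C2c d := by
    rw [Finset.sum_const, Finset.card_range, nsmul_eq_mul]
    field_simp
  rw [htel, hpull, hconst] at hsum
  -- bounds on the discrete L² norms
  have hQ0nonneg : ∀ j, 0 ≤ Q j := by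
    intro j
    apply Finset.sum_nonneg
    intro i hi
    rw [Finset.mem_Icc] at hi
    exact mul_nonneg (m.h_pos hi.1 hi.2).le (sq_nonneg _)
  have hQ0le : Q 0 ≤ UM d ^ 2 := by
    have : ∀ i ∈ Finset.Icc 1 m.I, m.h i * (sol u 0 i) ^ 2 ≤ m.h i * UM d ^ 2 := by
      intro i hi
      rw [Finset.mem_Icc] at hi
      have hst := hSt u 0 (by omega) i (by omega)
      apply mul_le_mul_of_nonneg_left ?_ (m.h_pos hi.1 hi.2).le
      apply sq_le_sq' (by linarith [(UM_pos d).le, le_trans hst.2 (umax_le_UM d u)])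
        (le_trans hst.2 (umax_le_UM d u))
    calc Q 0 ≤ ∑ i ∈ Finset.Icc 1 m.I, m.h i * UM d ^ 2 := Finset.sum_le_sum this
      _ = (∑ i ∈ Finset.Icc 1 m.I, m.h i) * UM d ^ 2 := by rw [← Finset.sum_mul]
      _ = UM d ^ 2 := by rw [m.sum_h, one_mul]
  have hp1 : d.epsu u * Q 0 ≤ max 1 d.eps * UM d ^ 2 :=
    mul_le_mul (epsu_le d u) hQ0le (hQ0nonneg 0)
      (le_trans zero_le_one (le_max_left _ _))
  have hp2 : 0 ≤ d.epsu u * Q K := mul_nonneg heu.le (hQ0nonneg K)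
  -- conclude
  rw [hb0def] at hsum
  unfold C3c
  rw [le_div_iff₀ (Real.exp_pos _)]
  nlinarith [hsum, hp1, hp2]

end Total
end Corrosion

open Corrosion in
/-- estimate on the dual norm of the discrete time derivatives. -/
theorem discrete_time_derivative_estimate
    (d : Data) (heps : 0 < d.eps) (ha0 : 0 < d.alpha0) (ha1 : 0 < d.alpha1) (hH : d.HypH)
    (T : ℝ) (hT : 0 < T) :
    ∃ C : ℝ, 0 < C ∧ ∀ (K : ℕ), 1 ≤ K → ∀ (m : Mesh)
      (sol : Sp → ℕ → ℕ → ℝ) (Psi : ℕ → ℕ → ℝ),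
      Scheme m d T K sol Psi → Stable m d K sol →
      ∀ u : Sp,
        (∑ k ∈ Finset.range K, T / K *
          (m.normDual (fun i => (sol u (k + 1) i - sol u k i) / (T / K))) ^ 2) ≤ C := by
  classical
  set em : ℝ := (min 1 d.eps)⁻¹ with hem
  set ee : ℝ := Real.exp (3 * MM d) with hee
  set c0 : ℝ := 3 * MM d * UM d + 2 * Cb d with hc0
  have hemin : (0:ℝ) < min 1 d.eps := lt_min one_pos heps
  have hem0 : 0 ≤ em := by rw [hem]; positivity
  have hee0 : (0:ℝ) < ee := Real.exp_pos _
  have hc00 : 0 ≤ c0 := by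
    have := MM_nonneg d ha1; have := (UM_pos d).le; have := (Cb_pos d).le
    rw [hc0]; positivity
  have hC3 := C3c_nonneg d ha1 T hT
  refine ⟨em ^ 2 * (2 * ee ^ 2 * C3c d T + 2 * c0 ^ 2 * T) + 1, ?_, ?_⟩
  · have h1 : 0 ≤ em ^ 2 * (2 * ee ^ 2 * C3c d T + 2 * c0 ^ 2 * T) := by
      have : 0 ≤ 2 * ee ^ 2 * C3c d T := by positivity
      have : 0 ≤ 2 * c0 ^ 2 * T := by positivity
      positivity
    linarith
  intro K hK m sol Psi hS hSt u
  have hKpos : (0:ℝ) < K := by exact_mod_cast Nat.lt_of_lt_of_le Nat.zero_lt_one hK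
  have hdt : (0:ℝ) < T / K := div_pos hT hKpos
  set Dsq : ℕ → ℝ := fun k => ∑ i ∈ Finset.range (m.I + 1),
      (sol u (k + 1) (i + 1) - sol u (k + 1) i) ^ 2 / m.hp i with hDsqdef
  -- per-step bound
  have hstep : ∀ k ∈ Finset.range K,
      T / K * (m.normDual (fun i => (sol u (k + 1) i - sol u k i) / (T / K))) ^ 2
        ≤ em ^ 2 * (2 * ee ^ 2 * ((T / K) * Dsq k) + 2 * c0 ^ 2 * (T / K)) := by
    intro k hk
    rw [Finset.mem_range] at hk
    obtain ⟨hnd0, hndle⟩ := step_dual d T K m sol Psi heps ha0 ha1 hS hSt hk u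
    have hD0 : 0 ≤ Dsq k := m.sum_sq_div_nonneg _
    have hsq : (m.normDual (fun i => (sol u (k + 1) i - sol u k i) / (T / K))) ^ 2
        ≤ (em * (ee * Real.sqrt (Dsq k) + c0)) ^ 2 := by
      apply pow_le_pow_left₀ hnd0
      exact hndle
    have hexpand : (em * (ee * Real.sqrt (Dsq k) + c0)) ^ 2
        ≤ em ^ 2 * (2 * ee ^ 2 * Dsq k + 2 * c0 ^ 2) := by
      rw [mul_pow]
      apply mul_le_mul_of_nonneg_left ?_ (by positivity)
      have hs := Real.sq_sqrt hD0
      nlinarith [sq_nonneg (ee * Real.sqrt (Dsq k) - c0), Real.sqrt_nonneg (Dsq k)]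
    calc T / K * (m.normDual (fun i => (sol u (k + 1) i - sol u k i) / (T / K))) ^ 2
        ≤ T / K * (em ^ 2 * (2 * ee ^ 2 * Dsq k + 2 * c0 ^ 2)) :=
          mul_le_mul_of_nonneg_left (le_trans hsq hexpand) hdt.le
      _ = em ^ 2 * (2 * ee ^ 2 * ((T / K) * Dsq k) + 2 * c0 ^ 2 * (T / K)) := by ring
  have hsum := Finset.sum_le_sum hstep
  have hrhs : ∑ k ∈ Finset.range K,
      em ^ 2 * (2 * ee ^ 2 * ((T / K) * Dsq k) + 2 * c0 ^ 2 * (T / K))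
        = em ^ 2 * (2 * ee ^ 2 * (∑ k ∈ Finset.range K, (T / K) * Dsq k) + 2 * c0 ^ 2 * T) := by
    rw [← Finset.mul_sum, Finset.sum_add_distrib, ← Finset.mul_sum, ← Finset.mul_sum]
    congr 2
    rw [Finset.sum_const, Finset.card_range, nsmul_eq_mul]
    field_simp
  rw [hrhs] at hsum
  have henergy := energy_total d T K m sol Psi heps hT hK ha0 ha1 hS hSt u
  have hfinal : em ^ 2 * (2 * ee ^ 2 * (∑ k ∈ Finset.range K, (T / K) * Dsq k) + 2 * c0 ^ 2 * T)
      ≤ em ^ 2 * (2 * ee ^ 2 * C3c d T + 2 * c0 ^ 2 * T) := by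
    apply mul_le_mul_of_nonneg_left ?_ (by positivity)
    have : 2 * ee ^ 2 * (∑ k ∈ Finset.range K, (T / K) * Dsq k) ≤ 2 * ee ^ 2 * C3c d T :=
      mul_le_mul_of_nonneg_left henergy (by positivity)
    linarith
  calc ∑ k ∈ Finset.range K, T / K *
        (m.normDual (fun i => (sol u (k + 1) i - sol u k i) / (T / K))) ^ 2
      ≤ em ^ 2 * (2 * ee ^ 2 * (∑ k ∈ Finset.range K, (T / K) * Dsq k) + 2 * c0 ^ 2 * T) :=
        hsum
    _ ≤ em ^ 2 * (2 * ee ^ 2 * C3c d T + 2 * c0 ^ 2 * T) := hfinal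
    _ ≤ em ^ 2 * (2 * ee ^ 2 * C3c d T + 2 * c0 ^ 2 * T) + 1 := by linarith
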